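/- arXiv:1107.2193 — 5 statements merged into one kernel-verified Lean document; each statement's English description precedes it below -/
import Mathlib

section
/- Let 0 < α < 2. Let (γ_i)_{i≥1} be i.i.d. random variables with exponential distribution of parameter 1 and set Γ_i = γ_1 + ... + γ_i. Let (ε_i)_{i≥1} be i.i.d. real random variables with E|ε_1| < ∞ and (W_i)_{i≥1} be i.i.d. nonnegative real random variables with E W_1 < ∞, such that the three sequences (Γ_i), (ε_i), (W_i) are mutually independent. Then almost surely ∑_{i=1}^∞ |Γ_i^{-1/α} − i^{-1/α}| · |ε_i| · W_i < ∞. -/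
open MeasureTheory ProbabilityTheory Filter

open Nat
open scoped ENNReal NNReal Topology

namespace Stmt0Aux

/-- Moments of the exponential distribution, Lebesgue-integral form. -/
lemma lintegral_pow_expMeasure (n : ℕ) :
    ∫⁻ x, ENNReal.ofReal (x ^ n) ∂(expMeasure 1) = ENNReal.ofReal (n !) := by
  have hpdf : Measurable (exponentialPDF 1) :=
    (measurable_exponentialPDFReal 1).ennreal_ofReal
  have hmeas : expMeasure 1 = volume.withDensity (exponentialPDF 1) := rfl
  rw [hmeas, lintegral_withDensity_eq_lintegral_mul _ hpdf
    (by exact (measurable_id.pow_const n).ennreal_ofReal)]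
  rw [← lintegral_add_compl (A := Set.Iio (0:ℝ)) _ measurableSet_Iio]
  have h0 : ∫⁻ x in Set.Iio (0:ℝ),
      (exponentialPDF 1 * fun x => ENNReal.ofReal (x ^ n)) x = 0 := by
    refine le_antisymm ?_ (by positivity)
    calc ∫⁻ x in Set.Iio (0:ℝ),
          (exponentialPDF 1 * fun x => ENNReal.ofReal (x ^ n)) x
        ≤ ∫⁻ x in Set.Iio (0:ℝ), exponentialPDF 1 x * ⊤ := by
          refine lintegral_mono fun x => ?_
          simp only [Pi.mul_apply]
          exact mul_le_mul_right le_top _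
      _ = ∫⁻ x in Set.Iio (0:ℝ), (0:ℝ≥0∞) := by
          refine setLIntegral_congr_fun measurableSet_Iio (fun x hx => ?_)
          rw [exponentialPDF_of_neg hx, zero_mul]
      _ = 0 := lintegral_zero
  rw [h0, zero_add]
  rw [Set.compl_Iio, setLIntegral_congr Ioi_ae_eq_Ici.symm]
  have hcongr : ∫⁻ x in Set.Ioi (0:ℝ),
      (exponentialPDF 1 * fun x => ENNReal.ofReal (x ^ n)) x
      = ∫⁻ x in Set.Ioi (0:ℝ), ENNReal.ofReal (Real.exp (-x) * x ^ n) := by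
    refine setLIntegral_congr_fun measurableSet_Ioi (fun x hx => ?_)
    have hx0 : (0:ℝ) ≤ x := le_of_lt hx
    simp only [Pi.mul_apply, exponentialPDF_of_nonneg hx0, one_mul]
    rw [← ENNReal.ofReal_mul (by positivity)]
  rw [hcongr]
  have h1 : ((n:ℝ) + 1) - 1 = ((n:ℕ) : ℝ) := by ring
  have hint : IntegrableOn (fun x : ℝ => Real.exp (-x) * x ^ n) (Set.Ioi 0) := by
    have := Real.GammaIntegral_convergent (s := (n:ℝ)+1) (by positivity)
    simp only [h1, Real.rpow_natCast] at this
    exact this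
  have hGam : ∫ x in Set.Ioi (0:ℝ), Real.exp (-x) * x ^ n = (n ! : ℝ) := by
    have h := Real.Gamma_eq_integral (s := (n:ℝ)+1) (by positivity)
    simp only [h1, Real.rpow_natCast] at h
    rw [← h]
    exact_mod_cast Real.Gamma_nat_eq_factorial n
  have hnn : 0 ≤ᵐ[volume.restrict (Set.Ioi (0:ℝ))] fun x : ℝ => Real.exp (-x) * x ^ n := by
    rw [EventuallyLE, ae_restrict_iff' measurableSet_Ioi]
    refine ae_of_all _ fun x hx => ?_
    have hx0 : (0:ℝ) < x := hx
    positivity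
  rw [← ofReal_integral_eq_lintegral_ofReal hint hnn, hGam]

lemma expMeasure_nonneg_ae : ∀ᵐ x ∂(expMeasure 1), 0 ≤ x := by
  rw [ae_iff]
  have h : {x : ℝ | ¬ (0:ℝ) ≤ x} = Set.Iio 0 := by ext x; simp
  rw [h]
  show (volume.withDensity (exponentialPDF 1)) (Set.Iio 0) = 0
  rw [withDensity_apply _ measurableSet_Iio]
  exact lintegral_exponentialPDF_of_nonpos le_rfl

lemma integrable_pow_expMeasure (n : ℕ) : Integrable (fun x : ℝ => x ^ n) (expMeasure 1) := by
  have hm : AEStronglyMeasurable (fun x : ℝ => x ^ n) (expMeasure 1) :=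
    (measurable_id.pow_const n).aestronglyMeasurable
  have hnn : 0 ≤ᵐ[expMeasure 1] fun x : ℝ => x ^ n :=
    expMeasure_nonneg_ae.mono fun x hx => pow_nonneg hx n
  refine (lintegral_ofReal_ne_top_iff_integrable hm hnn).mp ?_
  rw [lintegral_pow_expMeasure]
  exact ENNReal.ofReal_ne_top

lemma integral_pow_expMeasure (n : ℕ) : ∫ x, x ^ n ∂(expMeasure 1) = (n ! : ℝ) := by
  have hnn : 0 ≤ᵐ[expMeasure 1] fun x : ℝ => x ^ n :=
    expMeasure_nonneg_ae.mono fun x hx => pow_nonneg hx n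
  have h := ofReal_integral_eq_lintegral_ofReal (integrable_pow_expMeasure n) hnn
  rw [lintegral_pow_expMeasure] at h
  have h2 : (0:ℝ) ≤ ∫ x, x ^ n ∂(expMeasure 1) := integral_nonneg_of_ae hnn
  rw [ENNReal.ofReal_eq_ofReal_iff h2 (by positivity)] at h
  exact h

lemma rpow_diff_le {α c x : ℝ} (hα : 0 < α) (hc : 0 < c) (hx : c/2 ≤ x) :
    |x ^ (-1/α) - c ^ (-1/α)| ≤ ((1/α) * (c/2) ^ (-1/α - 1)) * |x - c| := by
  have h2 : (0:ℝ) < c/2 := by positivity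
  have hbound : ∀ t ∈ Set.Ici (c/2),
      ‖(-1/α) * t ^ (-1/α - 1)‖ ≤ (1/α) * (c/2) ^ (-1/α - 1) := by
    intro t ht
    have htpos : 0 < t := lt_of_lt_of_le h2 ht
    rw [Real.norm_eq_abs, abs_mul, abs_of_nonneg (Real.rpow_nonneg htpos.le _)]
    have habs : |(-1/α)| = 1/α := by
      rw [neg_div, abs_neg, abs_of_nonneg (by positivity)]
    rw [habs]
    refine mul_le_mul_of_nonneg_left ?_ (by positivity)
    exact Real.rpow_le_rpow_of_nonpos h2 ht (by
      have h1α : 0 < 1/α := by positivity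
      rw [neg_div]; linarith)
  have key := Convex.norm_image_sub_le_of_norm_hasDerivWithin_le
    (f := fun t : ℝ => t ^ (-1/α)) (f' := fun t : ℝ => (-1/α) * t ^ (-1/α - 1))
    (s := Set.Ici (c/2))
    (fun t ht => (Real.hasDerivAt_rpow_const
      (Or.inl (lt_of_lt_of_le h2 ht).ne')).hasDerivWithinAt)
    hbound (convex_Ici _) (Set.mem_Ici.2 (half_le_self hc.le)) (Set.mem_Ici.2 hx)
  simpa [Real.norm_eq_abs] using key

end Stmt0Aux


/-- Let `0 < α < 2`, `(γ_i)` i.i.d. exponential of parameter 1 with partial sums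
`Γ_i`, `(ε_i)` i.i.d. real with `E|ε_1| < ∞`, `(W_i)` i.i.d. nonnegative with `E W_1 < ∞`,
the three sequences mutually independent (equivalently, all the variables are jointly
independent).  Then a.s. `∑_i |Γ_i^{-1/α} - i^{-1/α}| |ε_i| W_i < ∞`.
Indexing convention: the Lean index `i : ℕ` corresponds to the index `i+1` of the paper. -/
theorem stmt0 {Ω : Type*} [MeasureSpace Ω] [IsProbabilityMeasure (ℙ : Measure Ω)]
    (α : ℝ) (hα0 : 0 < α) (hα2 : α < 2)
    (γ ε W : ℕ → Ω → ℝ)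
    (hγm : ∀ i, Measurable (γ i)) (hεm : ∀ i, Measurable (ε i)) (hWm : ∀ i, Measurable (W i))
    (hindep : iIndepFun
      (Sum.elim γ (Sum.elim ε W) : ℕ ⊕ (ℕ ⊕ ℕ) → Ω → ℝ) ℙ)
    (hγd : ∀ i, Measure.map (γ i) ℙ = expMeasure 1)
    (hεd : ∀ i, IdentDistrib (ε i) (ε 0) ℙ ℙ)
    (hWd : ∀ i, IdentDistrib (W i) (W 0) ℙ ℙ)
    (hεint : Integrable (ε 0) ℙ)
    (hWnonneg : ∀ i ω, 0 ≤ W i ω)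
    (hWint : Integrable (W 0) ℙ) :
    ∀ᵐ ω ∂ℙ, Summable (fun i : ℕ =>
      |(∑ j ∈ Finset.range (i + 1), γ j ω) ^ (-1 / α) - ((i : ℝ) + 1) ^ (-1 / α)|
        * |ε i ω| * W i ω) := by
  classical
  have hfm : ∀ k : ℕ ⊕ (ℕ ⊕ ℕ), Measurable (Sum.elim γ (Sum.elim ε W) k) := by
    rintro (j | j | j)
    exacts [hγm j, hεm j, hWm j]
  -- basic facts on γ
  have hγint : ∀ j, Integrable (γ j) ℙ := by
    intro j
    have h1 : Integrable (fun x : ℝ => x) (Measure.map (γ j) ℙ) := by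
      rw [hγd j]
      simpa using Stmt0Aux.integrable_pow_expMeasure 1
    exact (integrable_map_measure measurable_id.aestronglyMeasurable
      (hγm j).aemeasurable).mp h1
  have hγ1 : ∀ j, ℙ[γ j] = 1 := by
    intro j
    have h := integral_map (μ := ℙ) (hγm j).aemeasurable
      (measurable_id'.aestronglyMeasurable :
        AEStronglyMeasurable (fun x : ℝ => x) (Measure.map (γ j) ℙ))
    rw [hγd j] at h
    have h2 : ∫ x, x ∂(expMeasure 1) = 1 := by
      simpa using Stmt0Aux.integral_pow_expMeasure 1
    rw [show ℙ[γ j] = ∫ ω, γ j ω ∂ℙ from rfl, ← h, h2]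
  have hγℒ2 : ∀ j, MemLp (γ j) 2 ℙ := by
    intro j
    have h1 : MemLp (fun x : ℝ => x) 2 (Measure.map (γ j) ℙ) := by
      rw [hγd j]
      exact (memLp_two_iff_integrable_sq measurable_id.aestronglyMeasurable).mpr
        (by simpa using Stmt0Aux.integrable_pow_expMeasure 2)
    exact (memLp_map_measure_iff measurable_id.aestronglyMeasurable
      (hγm j).aemeasurable).mp h1
  have hγ2 : ∀ j, ∫ ω, (γ j ω) ^ 2 ∂ℙ = 2 := by
    intro j
    have h := integral_map (μ := ℙ) (hγm j).aemeasurable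
      ((measurable_id'.pow_const 2).aestronglyMeasurable :
        AEStronglyMeasurable (fun x : ℝ => x ^ 2) (Measure.map (γ j) ℙ))
    rw [hγd j] at h
    have h2 : ∫ x, x ^ 2 ∂(expMeasure 1) = 2 := by
      simpa using Stmt0Aux.integral_pow_expMeasure 2
    rw [← h, h2]
  have hγvar : ∀ j, variance (γ j) ℙ = 1 := by
    intro j
    rw [variance_eq_sub (hγℒ2 j)]
    have e1 : ℙ[(γ j) ^ 2] = 2 := by
      rw [show ((γ j) ^ 2 : Ω → ℝ) = fun ω => (γ j ω) ^ 2 by funext ω; simp]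
      exact hγ2 j
    rw [e1, hγ1 j]
    norm_num
  -- partial sums
  set S : ℕ → Ω → ℝ := fun i ω => ∑ j ∈ Finset.range (i+1), γ j ω with hSdef
  have hSfun : ∀ i, S i = ∑ j ∈ Finset.range (i+1), γ j := by
    intro i; funext ω; simp [hSdef]
  have hSm : ∀ i, Measurable (S i) := fun i =>
    Finset.measurable_sum _ (fun j _ => hγm j)
  have hSint : ∀ i, Integrable (S i) ℙ := fun i =>
    integrable_finset_sum _ (fun j _ => hγint j)
  have hSmean : ∀ i : ℕ, ℙ[S i] = (i : ℝ) + 1 := by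
    intro i
    rw [show ℙ[S i] = ∫ ω, ∑ j ∈ Finset.range (i+1), γ j ω ∂ℙ from rfl]
    rw [integral_finset_sum _ (fun j _ => hγint j)]
    have : ∀ j ∈ Finset.range (i+1), ∫ ω, γ j ω ∂ℙ = 1 := fun j _ => hγ1 j
    rw [Finset.sum_congr rfl this]
    simp
  have hSℒ2 : ∀ i, MemLp (S i) 2 ℙ := by
    intro i
    rw [hSfun i]
    exact memLp_finset_sum' _ (fun j _ => hγℒ2 j)
  have hSvar : ∀ i : ℕ, variance (S i) ℙ = (i : ℝ) + 1 := by
    intro i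
    rw [hSfun i]
    rw [IndepFun.variance_sum (fun j _ => hγℒ2 j)
      (fun j _ k _ hjk => hindep.indepFun
        (show (Sum.inl j : ℕ ⊕ (ℕ ⊕ ℕ)) ≠ Sum.inl k by simpa using hjk))]
    have : ∀ j ∈ Finset.range (i+1), variance (γ j) ℙ = 1 := fun j _ => hγvar j
    rw [Finset.sum_congr rfl this]
    simp
  -- second moment of centered sum
  have hS2int : ∀ i, Integrable (fun ω => (S i ω) ^ 2) ℙ := by
    intro i
    have := (hSℒ2 i).integrable_sq
    simpa using this
  have hES2 : ∀ i : ℕ, ∫ ω, (S i ω) ^ 2 ∂ℙ = ((i:ℝ)+1) + ((i:ℝ)+1) ^ 2 := by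
    intro i
    have h := variance_eq_sub (hSℒ2 i)
    rw [hSvar i, hSmean i] at h
    have e1 : ℙ[(S i) ^ 2] = ∫ ω, (S i ω) ^ 2 ∂ℙ := by
      rw [show ((S i) ^ 2 : Ω → ℝ) = fun ω => (S i ω) ^ 2 by funext ω; simp]
    rw [e1] at h
    linarith
  -- L¹ deviation bound
  have hSdev : ∀ i : ℕ, ∫ ω, |S i ω - ((i:ℝ)+1)| ∂ℙ ≤ Real.sqrt ((i:ℝ)+1) := by
    intro i
    set c : ℝ := (i:ℝ) + 1 with hc
    have hcpos : 0 < c := by positivity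
    set t : ℝ := Real.sqrt c with ht
    have htpos : 0 < t := Real.sqrt_pos.2 hcpos
    have htsq : t ^ 2 = c := Real.sq_sqrt hcpos.le
    have hYint : Integrable (fun ω => S i ω - c) ℙ := (hSint i).sub (integrable_const c)
    have hsub : Integrable (fun ω => S i ω ^ 2 - 2 * c * S i ω) ℙ := by
      have h := (hS2int i).sub ((hSint i).const_mul (2 * c))
      exact h.congr (ae_of_all _ fun ω => by simp [Pi.sub_apply])
    have hY2int : Integrable (fun ω => (S i ω - c) ^ 2) ℙ := by
      have h1 : Integrable (fun ω => S i ω ^ 2 - 2 * c * S i ω + c ^ 2) ℙ := by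
        have h := hsub.add (integrable_const (c ^ 2))
        exact h.congr (ae_of_all _ fun ω => by simp [Pi.add_apply])
      exact h1.congr (ae_of_all _ fun ω => by ring)
    have hY2 : ∫ ω, (S i ω - c) ^ 2 ∂ℙ = c := by
      have e : ∫ ω, (S i ω - c) ^ 2 ∂ℙ = ∫ ω, (S i ω ^ 2 - 2 * c * S i ω) + c ^ 2 ∂ℙ :=
        integral_congr_ae (ae_of_all _ fun ω => by ring)
      rw [e, integral_add hsub (integrable_const _),
        integral_sub (hS2int i) ((hSint i).const_mul (2 * c)),
        integral_const_mul, hES2 i]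
      have h5 : ∫ ω, S i ω ∂ℙ = c := hSmean i
      rw [h5, integral_const]
      simp only [measure_univ, ENNReal.toReal_one, smul_eq_mul, one_mul, probReal_univ]
      rw [hc]
      ring
    have hptw : ∀ ω, |S i ω - c| ≤ ((S i ω - c) ^ 2 / t + t) / 2 := by
      intro ω
      have h4 : (S i ω - c) ^ 2 / t + t = ((S i ω - c) ^ 2 + t ^ 2) / t := by
        field_simp
      rw [h4, div_div, le_div_iff₀ (by positivity : (0:ℝ) < t * 2)]
      nlinarith [sq_nonneg (|S i ω - c| - t), sq_abs (S i ω - c), abs_nonneg (S i ω - c)]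
    have hint2 : Integrable (fun ω => ((S i ω - c) ^ 2 / t + t) / 2) ℙ := by
      have h1 : Integrable (fun ω => (S i ω - c) ^ 2 / t + t) ℙ := by
        have h := (hY2int.div_const t).add (integrable_const t)
        exact h.congr (ae_of_all _ fun ω => by simp [Pi.add_apply])
      exact h1.div_const 2
    calc ∫ ω, |S i ω - c| ∂ℙ
        ≤ ∫ ω, ((S i ω - c) ^ 2 / t + t) / 2 ∂ℙ := integral_mono hYint.abs hint2 hptw
      _ = ((c / t) + t) / 2 := by
          rw [integral_div, integral_add (hY2int.div_const t) (integrable_const t),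
            integral_div, hY2, integral_const]
          simp [measure_univ]
      _ = t := by
          rw [← htsq]
          field_simp
          ring
  -- ε and W facts
  have hεabs : ∀ i, IdentDistrib (fun ω => |ε i ω|) (fun ω => |ε 0 ω|) ℙ ℙ :=
    fun i => (hεd i).comp measurable_abs
  have hεabsint : ∀ i, Integrable (fun ω => |ε i ω|) ℙ :=
    fun i => (hεabs i).integrable_iff.mpr hεint.abs
  have hWint' : ∀ i, Integrable (W i) ℙ := fun i => (hWd i).integrable_iff.mpr hWint
  set cε : ℝ := ∫ ω, |ε 0 ω| ∂ℙ with hcε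
  set cW : ℝ := ∫ ω, W 0 ω ∂ℙ with hcW
  have hεmean : ∀ i, ∫ ω, |ε i ω| ∂ℙ = cε := fun i => (hεabs i).integral_eq
  have hWmean : ∀ i, ∫ ω, W i ω ∂ℙ = cW := fun i => (hWd i).integral_eq
  have hcε0 : 0 ≤ cε := integral_nonneg fun ω => abs_nonneg _
  have hcW0 : 0 ≤ cW := integral_nonneg fun ω => hWnonneg 0 ω
  -- independence of |ε i| and W i
  have hIεW : ∀ i, IndepFun (fun ω => |ε i ω|) (W i) ℙ := by
    intro i
    have h := hindep.indepFun
      (show (Sum.inr (Sum.inl i) : ℕ ⊕ (ℕ ⊕ ℕ)) ≠ Sum.inr (Sum.inr i) by simp)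
    exact h.comp measurable_abs measurable_id
  set B : ℕ → Ω → ℝ := fun i ω => |ε i ω| * W i ω with hBdef
  have hBm : ∀ i, Measurable (B i) := fun i => (hεm i).abs.mul (hWm i)
  have hB0 : ∀ i ω, 0 ≤ B i ω := fun i ω => mul_nonneg (abs_nonneg _) (hWnonneg i ω)
  have hBint : ∀ i, Integrable (B i) ℙ := by
    intro i
    have := (hIεW i).integrable_mul (hεabsint i) (hWint' i)
    exact this
  have hBmean : ∀ i, ∫ ω, B i ω ∂ℙ = cε * cW := by
    intro i
    have h := (hIεW i).integral_mul_eq_mul_integral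
      ((hεm i).abs.aestronglyMeasurable) (hWm i).aestronglyMeasurable
    rw [show (∫ ω, B i ω ∂ℙ) = integral ℙ ((fun ω => |ε i ω|) * W i) from rfl, h,
      hεmean i, hWmean i]
  -- independence of |S i - (i+1)| and B i
  set A : ℕ → Ω → ℝ := fun i ω => |S i ω - ((i:ℝ)+1)| with hAdef
  have hAm : ∀ i, Measurable (A i) := fun i => ((hSm i).sub measurable_const).abs
  have hA0 : ∀ i ω, 0 ≤ A i ω := fun i ω => abs_nonneg _
  have hAint : ∀ i, Integrable (A i) ℙ := fun i => ((hSint i).sub (integrable_const _)).abs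
  have hIAB : ∀ i, IndepFun (A i) (B i) ℙ := by
    intro i
    set Sfin : Finset (ℕ ⊕ (ℕ ⊕ ℕ)) := (Finset.range (i+1)).image Sum.inl with hSfin
    set Tfin : Finset (ℕ ⊕ (ℕ ⊕ ℕ)) := {Sum.inr (Sum.inl i), Sum.inr (Sum.inr i)} with hTfin
    have hdisj : Disjoint Sfin Tfin := by
      rw [Finset.disjoint_left]
      rintro k hk hk'
      simp only [hSfin, Finset.mem_image] at hk
      obtain ⟨j, -, rfl⟩ := hk
      simp [hTfin] at hk'
    have hmem1 : (Sum.inr (Sum.inl i) : ℕ ⊕ (ℕ ⊕ ℕ)) ∈ Tfin := by simp [hTfin]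
    have hmem2 : (Sum.inr (Sum.inr i) : ℕ ⊕ (ℕ ⊕ ℕ)) ∈ Tfin := by simp [hTfin]
    have h := hindep.indepFun_finset Sfin Tfin hdisj hfm
    have h2 : IndepFun
        ((fun v : Sfin → ℝ => |(∑ k, v k) - ((i:ℝ)+1)|)
          ∘ (fun a (k : Sfin) => Sum.elim γ (Sum.elim ε W) k a))
        ((fun v : Tfin → ℝ => |v ⟨_, hmem1⟩| * v ⟨_, hmem2⟩)
          ∘ (fun a (k : Tfin) => Sum.elim γ (Sum.elim ε W) k a)) ℙ :=
      h.comp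
        (((Finset.measurable_sum Finset.univ (fun k _ => measurable_pi_apply k)).sub
          measurable_const).abs)
        ((measurable_pi_apply _).abs.mul (measurable_pi_apply _))
    have hAeq : ((fun v : Sfin → ℝ => |(∑ k, v k) - ((i:ℝ)+1)|)
        ∘ (fun a (k : Sfin) => Sum.elim γ (Sum.elim ε W) k a)) = A i := by
      funext a
      simp only [Function.comp_apply, hAdef]
      congr 2
      rw [Finset.sum_coe_sort Sfin (fun k => Sum.elim γ (Sum.elim ε W) k a), hSfin,
        Finset.sum_image (fun x _ y _ h => Sum.inl_injective h)]
      rfl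
    have hBeq : ((fun v : Tfin → ℝ => |v ⟨_, hmem1⟩| * v ⟨_, hmem2⟩)
        ∘ (fun a (k : Tfin) => Sum.elim γ (Sum.elim ε W) k a)) = B i := rfl
    rw [hAeq, hBeq] at h2
    exact h2
  -- the dominating series
  set g : ℕ → Ω → ℝ := fun i ω => A i ω * B i ω with hgdef
  have hg0 : ∀ i ω, 0 ≤ g i ω := fun i ω => mul_nonneg (hA0 i ω) (hB0 i ω)
  have hgm : ∀ i, Measurable (g i) := fun i => (hAm i).mul (hBm i)
  have hgint : ∀ i, Integrable (g i) ℙ := fun i => (hIAB i).integrable_mul (hAint i) (hBint i)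
  have hgmean : ∀ i : ℕ, ∫ ω, g i ω ∂ℙ ≤ Real.sqrt ((i:ℝ)+1) * (cε * cW) := by
    intro i
    have h := (hIAB i).integral_mul_eq_mul_integral
      (hAm i).aestronglyMeasurable (hBm i).aestronglyMeasurable
    rw [show (∫ ω, g i ω ∂ℙ) = integral ℙ (A i * B i) from rfl, h, hBmean i]
    exact mul_le_mul_of_nonneg_right (hSdev i) (mul_nonneg hcε0 hcW0)
  -- summability of the deterministic majorant
  set q : ℝ := -1/α - 1 + 1/2 with hq
  have hqlt : q < -1 := by
    have h12 : (1:ℝ)/2 < 1/α := by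
      rw [div_lt_div_iff₀ (by norm_num) hα0]
      linarith
    have : (-1:ℝ)/α = -(1/α) := neg_div _ _
    rw [hq, this]
    linarith
  have hsummaj : Summable (fun i : ℕ => ((i:ℝ)+1) ^ q) := by
    have h1 : Summable (fun n : ℕ => (n:ℝ) ^ q) := Real.summable_nat_rpow.2 hqlt
    have h2 := (summable_nat_add_iff 1).2 h1
    refine h2.congr fun n => ?_
    push_cast
    ring_nf
  set u : ℕ → ℝ := fun i => ((i:ℝ)+1) ^ (-1/α - 1) with hu
  have hu0 : ∀ i, 0 < u i := fun i => Real.rpow_pos_of_pos (by positivity) _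
  have hmulq : ∀ i : ℕ, u i * Real.sqrt ((i:ℝ)+1) = ((i:ℝ)+1) ^ q := by
    intro i
    rw [Real.sqrt_eq_rpow, hu, ← Real.rpow_add (by positivity : (0:ℝ) < (i:ℝ)+1), hq]
  -- Tonelli
  set G : ℕ → Ω → ℝ≥0∞ := fun i ω => ENNReal.ofReal (u i * g i ω) with hG
  have hGm : ∀ i, Measurable (G i) := fun i => ((hgm i).const_mul (u i)).ennreal_ofReal
  have hGint : ∀ i : ℕ, ∫⁻ ω, G i ω ∂ℙ = ENNReal.ofReal (u i * ∫ ω, g i ω ∂ℙ) := by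
    intro i
    simp only [hG]
    rw [← ofReal_integral_eq_lintegral_ofReal ((hgint i).const_mul (u i))
      (ae_of_all _ fun ω => mul_nonneg (hu0 i).le (hg0 i ω))]
    rw [integral_const_mul]
  have htsum : ∑' i, ∫⁻ ω, G i ω ∂ℙ ≠ ⊤ := by
    have hle : ∀ i : ℕ, ∫⁻ ω, G i ω ∂ℙ ≤ ENNReal.ofReal ((cε * cW) * (((i:ℝ)+1) ^ q)) := by
      intro i
      rw [hGint i]
      apply ENNReal.ofReal_le_ofReal
      calc u i * ∫ ω, g i ω ∂ℙ
          ≤ u i * (Real.sqrt ((i:ℝ)+1) * (cε * cW)) :=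
            mul_le_mul_of_nonneg_left (hgmean i) (hu0 i).le
        _ = (cε * cW) * (((i:ℝ)+1) ^ q) := by rw [← hmulq i]; ring
    refine ne_top_of_le_ne_top ?_ (ENNReal.tsum_le_tsum hle)
    rw [← ENNReal.ofReal_tsum_of_nonneg
      (fun i => mul_nonneg (mul_nonneg hcε0 hcW0) (Real.rpow_pos_of_pos (by positivity) _).le)
      (hsummaj.mul_left _)]
    exact ENNReal.ofReal_ne_top
  have haefin : ∀ᵐ ω ∂ℙ, ∑' i, G i ω < ⊤ := by
    refine ae_lt_top (Measurable.ennreal_tsum hGm) ?_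
    rw [lintegral_tsum (fun i => (hGm i).aemeasurable)]
    exact htsum
  -- SLLN
  have hpair : Pairwise (Function.onFun (IndepFun · · ℙ) γ) := fun i j hij =>
    hindep.indepFun (show (Sum.inl i : ℕ ⊕ (ℕ ⊕ ℕ)) ≠ Sum.inl j by simpa using hij)
  have hidentγ : ∀ i, IdentDistrib (γ i) (γ 0) ℙ ℙ := fun i =>
    ⟨(hγm i).aemeasurable, (hγm 0).aemeasurable, by rw [hγd i, hγd 0]⟩
  have hslln := strong_law_ae γ (hγint 0) hpair hidentγ
  rw [hγ1 0] at hslln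
  -- conclusion
  filter_upwards [hslln, haefin] with ω hω1 hω2
  -- summability of the random majorant at ω
  have hgsum : Summable (fun i => u i * g i ω) := by
    have hne : ∑' i, G i ω ≠ ⊤ := hω2.ne
    have h1 : Summable (fun i => (u i * g i ω).toNNReal) := by
      rw [← ENNReal.tsum_coe_ne_top_iff_summable]
      exact hne
    have h2 := NNReal.summable_coe.2 h1
    refine h2.congr fun i => ?_
    exact Real.coe_toNNReal _ (mul_nonneg (hu0 i).le (hg0 i ω))
  -- eventual lower bound on partial sums
  have hS2' : Tendsto (fun i : ℕ => ((i:ℝ)+1)⁻¹ * S i ω) atTop (𝓝 1) := by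
    have h := hω1.comp (tendsto_add_atTop_nat 1)
    refine h.congr fun i => ?_
    simp only [Function.comp_apply, smul_eq_mul, hSdef]
    push_cast
    ring_nf
  have hev : ∀ᶠ i : ℕ in atTop, ((i:ℝ)+1)/2 ≤ S i ω := by
    filter_upwards [hS2'.eventually (eventually_gt_nhds (by norm_num : (1/2:ℝ) < 1))] with i hi
    have hipos : (0:ℝ) < (i:ℝ)+1 := by positivity
    have hinv : ((i:ℝ)+1) * ((i:ℝ)+1)⁻¹ = 1 := mul_inv_cancel₀ hipos.ne'
    nlinarith [hi, hinv, hipos]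
  obtain ⟨N, hN⟩ := eventually_atTop.1 hev
  set K : ℝ := (1/α) * (2:ℝ) ^ (1/α + 1) with hK
  have hK0 : 0 ≤ K := by
    rw [hK]
    positivity
  refine (summable_nat_add_iff N).1 ?_
  have hmaj : Summable (fun n : ℕ => K * (u (n+N) * g (n+N) ω)) :=
    ((summable_nat_add_iff N).2 hgsum).mul_left K
  refine Summable.of_nonneg_of_le (fun n => ?_) (fun n => ?_) hmaj
  · exact mul_nonneg (mul_nonneg (abs_nonneg _) (abs_nonneg _)) (hWnonneg _ ω)
  · have hcpos : (0:ℝ) < ((n+N:ℕ):ℝ) + 1 := by positivity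
    have hvN : (((n+N:ℕ):ℝ) + 1)/2 ≤ S (n+N) ω := hN (n+N) (Nat.le_add_left N n)
    have hkey := Stmt0Aux.rpow_diff_le hα0 hcpos hvN
    have hhalf : ((((n+N:ℕ):ℝ) + 1)/2) ^ (-1/α - 1) = (2:ℝ) ^ (1/α + 1) * u (n+N) := by
      rw [Real.div_rpow hcpos.le (by norm_num : (0:ℝ) ≤ 2), div_eq_mul_inv,
        ← Real.rpow_neg (by norm_num : (0:ℝ) ≤ 2)]
      rw [show -(-1/α - 1) = 1/α + 1 by rw [neg_div]; ring]
      simp only [hu]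
      ring
    calc |(∑ j ∈ Finset.range (n + N + 1), γ j ω) ^ (-1 / α) - ((((n+N:ℕ)):ℝ) + 1) ^ (-1 / α)|
          * |ε (n+N) ω| * W (n+N) ω
        ≤ (((1/α) * (((((n+N:ℕ):ℝ) + 1)/2) ^ (-1/α - 1)))
            * |S (n+N) ω - (((n+N:ℕ):ℝ) + 1)|) * |ε (n+N) ω| * W (n+N) ω := by
          refine mul_le_mul_of_nonneg_right
            (mul_le_mul_of_nonneg_right ?_ (abs_nonneg _)) (hWnonneg _ _)
          exact hkey
      _ = K * (u (n+N) * g (n+N) ω) := by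
          rw [hhalf]
          simp only [hgdef, hAdef, hBdef, hK]
          ring
end

section
/- Let 0 < α < m and let ε be a real random variable with E|ε|^α < ∞. Then ∑_{i=1}^∞ i^{-m/α} · E(|ε|^m · 1_{{|ε| ≤ i^{1/α}}}) < ∞. -/
open MeasureTheory ProbabilityTheory Filter
open scoped ENNReal NNReal

open Finset in

lemma tailSum (p : ℝ) (hp : 1 < p) (N K : ℕ) (hN : 1 ≤ N) :
    ∑ n ∈ Finset.Ico N K, ((n : ℝ)) ^ (-p) ≤ (1 + 1/(p-1)) * (N : ℝ) ^ (1 - p) := by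
  have hp1 : 0 < p - 1 := by linarith
  have hNR : (1 : ℝ) ≤ (N : ℝ) := by exact_mod_cast hN
  have hNpos : (0 : ℝ) < N := by linarith
  have hC : (0:ℝ) ≤ (1 + 1/(p-1)) := by positivity
  rcases le_or_gt K N with hKN | hNK
  · rw [Finset.Ico_eq_empty (by omega)]
    simp only [Finset.sum_empty]
    positivity
  · rw [Finset.sum_eq_sum_Ico_succ_bot hNK]
    have h1 : (N:ℝ) ^ (-p) ≤ (N:ℝ) ^ (1-p) :=
      Real.rpow_le_rpow_of_exponent_le hNR (by linarith)
    have h2 : ∑ n ∈ Finset.Ico (N+1) K, ((n : ℝ)) ^ (-p) ≤ 1/(p-1) * (N:ℝ) ^ (1-p) := by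
      have hKK : N ≤ K - 1 := by omega
      have hrei : ∑ n ∈ Finset.Ico (N+1) K, ((n : ℝ)) ^ (-p)
          = ∑ i ∈ Finset.Ico N (K-1), (((i+1 : ℕ) : ℝ)) ^ (-p) := by
        have hK : K - 1 + 1 = K := by omega
        rw [← hK, ← Finset.sum_Ico_add' (fun n : ℕ => ((n:ℝ)) ^ (-p)) N (K-1) 1, Nat.add_sub_cancel]
      have hanti : AntitoneOn (fun x : ℝ => x ^ (-p)) (Set.Icc (N:ℝ) ((K-1 : ℕ) : ℝ)) := by
        intro a ha b hb hab
        exact Real.rpow_le_rpow_of_nonpos (lt_of_lt_of_le hNpos ha.1) hab (by linarith)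
      have := AntitoneOn.sum_le_integral_Ico (f := fun x : ℝ => x ^ (-p))
        (by exact_mod_cast hKK) hanti
      rw [hrei]
      refine le_trans this ?_
      have hint : ∫ x in (N:ℝ)..((K-1:ℕ):ℝ), x ^ (-p)
          = (((K-1:ℕ):ℝ) ^ (-p+1) - (N:ℝ) ^ (-p+1)) / (-p+1) := by
        apply integral_rpow
        right
        constructor
        · intro h; rw [neg_eq_iff_eq_neg] at h; linarith
        · intro h
          rw [Set.uIcc_of_le (by exact_mod_cast hKK)] at h
          exact absurd h.1 (by linarith)
      rw [hint]
      have hK1 : (0:ℝ) ≤ ((K-1:ℕ):ℝ) ^ (-p+1) := Real.rpow_nonneg (Nat.cast_nonneg _) _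
      rw [div_le_iff_of_neg (by linarith : -p+1 < 0)]
      have : (1:ℝ)/(p-1) * (N:ℝ) ^ (1-p) * (-p+1) = -((N:ℝ) ^ (1-p)) := by
        field_simp
        ring
      rw [this]
      have : (1:ℝ) - p = -p + 1 := by ring
      rw [this]
      linarith
    linarith [h1, h2]

lemma keyBound (p : ℝ) (hp : 1 < p) (y : ℝ) (hy : 0 ≤ y) (s : Finset ℕ) :
    ∑ i ∈ s, (if y ≤ (i:ℝ)+1 then ((i:ℝ)+1) ^ (-p) * y ^ p else 0) ≤ (1 + 1/(p-1)) * y := by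
  have hp1 : (0:ℝ) < p - 1 := by linarith
  have hC : (0:ℝ) ≤ 1 + 1/(p-1) := by positivity
  rcases eq_or_lt_of_le hy with h0 | hy0
  · simp [← h0, Real.zero_rpow (show p ≠ 0 by linarith)]
  set N := max ⌈y⌉₊ 1 with hN
  set K := s.sup id + 2 with hK
  have step1 : ∑ i ∈ s, (if y ≤ (i:ℝ)+1 then ((i:ℝ)+1) ^ (-p) * y ^ p else 0)
      ≤ y ^ p * ∑ n ∈ Finset.Ico N K, ((n:ℝ)) ^ (-p) := by
    have hrw : ∀ i : ℕ, (if y ≤ (i:ℝ)+1 then ((i:ℝ)+1) ^ (-p) * y ^ p else 0)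
        = y ^ p * (if y ≤ (i:ℝ)+1 then ((i:ℝ)+1) ^ (-p) else 0) := by
      intro i
      by_cases h : y ≤ (i:ℝ)+1 <;> simp [h, mul_comm]
    simp only [hrw]
    rw [← Finset.mul_sum]
    apply mul_le_mul_of_nonneg_left _ (Real.rpow_nonneg hy p)
    classical
    rw [← Finset.sum_filter]
    have hcast : ∀ i : ℕ, ((i:ℝ)+1) = (((i+1:ℕ)):ℝ) := by intro i; push_cast; ring
    calc ∑ i ∈ s.filter (fun i : ℕ => y ≤ (i:ℝ)+1), ((i:ℝ)+1) ^ (-p)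
        = ∑ i ∈ s.filter (fun i : ℕ => y ≤ (i:ℝ)+1), (((i+1 : ℕ)):ℝ) ^ (-p) :=
          Finset.sum_congr rfl (fun i _ => by rw [hcast])
      _ = ∑ n ∈ (s.filter (fun i : ℕ => y ≤ (i:ℝ)+1)).image (fun i : ℕ => i+1),
            ((n:ℝ)) ^ (-p) :=
          by rw [Finset.sum_image]; intro a _ b _ h; simp only at h; omega
      _ ≤ ∑ n ∈ Finset.Ico N K, ((n:ℝ)) ^ (-p) := by
          apply Finset.sum_le_sum_of_subset_of_nonneg
          · intro n hn
            simp only [Finset.mem_image, Finset.mem_filter] at hn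
            obtain ⟨i, ⟨his, hcond⟩, rfl⟩ := hn
            rw [Finset.mem_Ico]
            constructor
            · apply max_le
              · exact Nat.ceil_le.mpr (by push_cast; linarith)
              · omega
            · have : i ≤ s.sup id := Finset.le_sup (f := id) his
              omega
          · intro n _ _
            exact Real.rpow_nonneg (Nat.cast_nonneg n) _
  have step2 := tailSum p hp N K (le_max_right _ _)
  have key : y ^ p * (N:ℝ) ^ (1-p) ≤ y := by
    rcases le_or_gt y 1 with hy1 | hy1
    · have hN1 : N = 1 := by
        have h1 : ⌈y⌉₊ ≤ 1 := Nat.ceil_le.mpr (by exact_mod_cast hy1)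
        omega
      rw [hN1]
      simp only [Nat.cast_one, Real.one_rpow, mul_one]
      calc y ^ p ≤ y ^ (1:ℝ) := Real.rpow_le_rpow_of_exponent_ge hy0 hy1 (by linarith)
        _ = y := Real.rpow_one y
    · have hNy : y ≤ (N:ℝ) := by
        refine le_trans (Nat.le_ceil y) ?_
        exact_mod_cast Nat.le_max_left _ _
      calc y ^ p * (N:ℝ) ^ (1-p) ≤ y ^ p * y ^ (1-p) := by
            apply mul_le_mul_of_nonneg_left _ (Real.rpow_nonneg hy p)
            exact Real.rpow_le_rpow_of_nonpos hy0 hNy (by linarith)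
        _ = y := by rw [← Real.rpow_add hy0]; norm_num
  calc ∑ i ∈ s, (if y ≤ (i:ℝ)+1 then ((i:ℝ)+1) ^ (-p) * y ^ p else 0)
      ≤ y ^ p * ∑ n ∈ Finset.Ico N K, ((n:ℝ)) ^ (-p) := step1
    _ ≤ y ^ p * ((1 + 1/(p-1)) * (N:ℝ) ^ (1-p)) := by
        apply mul_le_mul_of_nonneg_left step2 (Real.rpow_nonneg hy p)
    _ = (1 + 1/(p-1)) * (y ^ p * (N:ℝ) ^ (1-p)) := by ring
    _ ≤ (1 + 1/(p-1)) * y := mul_le_mul_of_nonneg_left key hC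



/-- Let `0 < α < m` and let `ε` be a real random variable with `E|ε|^α < ∞`.
Then `∑_{i≥1} i^{-m/α} E(|ε|^m 1_{|ε| ≤ i^{1/α}}) < ∞`.
Indexing convention: the Lean index `i : ℕ` corresponds to the index `i+1` of the paper. -/
theorem stmt3 {Ω : Type*} [MeasureSpace Ω] [IsProbabilityMeasure (ℙ : Measure Ω)]
    (α m : ℝ) (hα : 0 < α) (hm : α < m)
    (ε : Ω → ℝ) (hεm : Measurable ε)
    (hεα : Integrable (fun ω => |ε ω| ^ α) ℙ) :
    Summable (fun i : ℕ => ((i : ℝ) + 1) ^ (-(m / α)) *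
      ∫ ω in {ω | |ε ω| ≤ ((i : ℝ) + 1) ^ (1 / α)}, |ε ω| ^ m ∂ℙ) := by
  have hα0 : α ≠ 0 := ne_of_gt hα
  set p := m / α with hpdef
  have hp1 : 1 < p := (one_lt_div hα).mpr hm
  set C := 1 + 1/(p-1) with hCdef
  have hC0 : 0 ≤ C := by
    have : (0:ℝ) < p - 1 := by linarith
    positivity
  have habs : Measurable fun ω => |ε ω| := hεm.abs
  set S : ℕ → Set Ω := fun i => {ω | |ε ω| ≤ ((i : ℝ) + 1) ^ (1 / α)} with hS
  have hSmeas : ∀ i, MeasurableSet (S i) := fun i =>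
    measurableSet_le habs measurable_const
  have hmm : Measurable fun ω => |ε ω| ^ m := habs.pow measurable_const
  set L : ℕ → ℝ≥0∞ := fun i => ∫⁻ ω in S i, ENNReal.ofReal (|ε ω| ^ m) ∂ℙ with hL
  have hInt : ∀ i, ∫ ω in S i, |ε ω| ^ m ∂ℙ = (L i).toReal := fun i =>
    integral_eq_lintegral_of_nonneg_ae
      (Filter.Eventually.of_forall fun ω => Real.rpow_nonneg (abs_nonneg _) m)
      hmm.aestronglyMeasurable.restrict
  set c : ℕ → ℝ := fun i => ((i : ℝ) + 1) ^ (-p) with hc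
  have hc0 : ∀ i, 0 ≤ c i := fun i => Real.rpow_nonneg (by positivity) _
  -- the ENNReal-valued integrands
  set g : ℕ → Ω → ℝ≥0∞ := fun i =>
    (S i).indicator (fun ω => ENNReal.ofReal (c i * |ε ω| ^ m)) with hg
  have hgmeas : ∀ i, Measurable (g i) := fun i =>
    (ENNReal.measurable_ofReal.comp (hmm.const_mul (c i))).indicator (hSmeas i)
  have hgint : ∀ i, ∫⁻ ω, g i ω ∂ℙ = ENNReal.ofReal (c i) * L i := by
    intro i
    simp only [hg]
    rw [lintegral_indicator (hSmeas i)]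
    have : ∀ ω, ENNReal.ofReal (c i * |ε ω| ^ m)
        = ENNReal.ofReal (c i) * ENNReal.ofReal (|ε ω| ^ m) := fun ω =>
      ENNReal.ofReal_mul (hc0 i)
    simp_rw [this]
    rw [lintegral_const_mul' _ _ ENNReal.ofReal_ne_top]
  -- pointwise bound on the tsum
  have hpt : ∀ ω, ∑' i, g i ω ≤ ENNReal.ofReal (C * |ε ω| ^ α) := by
    intro ω
    set x := |ε ω| with hx
    have hx0 : 0 ≤ x := abs_nonneg _
    have hy0 : 0 ≤ x ^ α := Real.rpow_nonneg hx0 α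
    have hcond : ∀ i : ℕ, (ω ∈ S i) ↔ x ^ α ≤ (i : ℝ) + 1 := by
      intro i
      have hb : (0:ℝ) ≤ (i:ℝ) + 1 := by positivity
      have h2 : (((i:ℝ)+1) ^ (1/α)) ^ α = (i:ℝ) + 1 := by
        rw [← Real.rpow_mul hb, one_div_mul_cancel hα0, Real.rpow_one]
      constructor
      · intro h
        have := (Real.rpow_le_rpow_iff hx0 (Real.rpow_nonneg hb _) hα).mpr h
        rwa [h2] at this
      · intro h
        apply (Real.rpow_le_rpow_iff hx0 (Real.rpow_nonneg hb _) hα).mp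
        rwa [h2]
    have hxm : x ^ m = (x ^ α) ^ p := by
      rw [← Real.rpow_mul hx0]
      congr 1
      rw [hpdef]
      field_simp
    classical
    have hgval : ∀ i : ℕ, g i ω
        = if x ^ α ≤ (i:ℝ)+1 then ENNReal.ofReal (((i:ℝ)+1) ^ (-p) * (x ^ α) ^ p) else 0 := by
      intro i
      simp only [hg, Set.indicator_apply]
      rw [← hxm]
      by_cases h : ω ∈ S i
      · rw [if_pos h, if_pos ((hcond i).mp h)]
      · rw [if_neg h, if_neg (fun hh => h ((hcond i).mpr hh))]
    simp_rw [hgval]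
    rw [ENNReal.tsum_eq_iSup_sum]
    apply iSup_le
    intro s
    have hterm : ∀ i : ℕ,
        (if x ^ α ≤ (i:ℝ)+1 then ENNReal.ofReal (((i:ℝ)+1) ^ (-p) * (x ^ α) ^ p) else 0)
        = ENNReal.ofReal (if x ^ α ≤ (i:ℝ)+1 then ((i:ℝ)+1) ^ (-p) * (x ^ α) ^ p else 0) := by
      intro i
      by_cases h : x ^ α ≤ (i:ℝ)+1 <;> simp [h]
    simp_rw [hterm]
    rw [← ENNReal.ofReal_sum_of_nonneg]
    · exact ENNReal.ofReal_le_ofReal (keyBound p hp1 (x ^ α) hy0 s)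
    · intro i _
      by_cases h : x ^ α ≤ (i:ℝ)+1 <;> simp [h]
      exact mul_nonneg (hc0 i) (Real.rpow_nonneg hy0 p)
  -- finiteness of the total mass
  have hfin : ∑' i, ENNReal.ofReal (c i) * L i ≠ ⊤ := by
    have h1 : ∑' i, ENNReal.ofReal (c i) * L i = ∫⁻ ω, ∑' i, g i ω ∂ℙ := by
      rw [lintegral_tsum (fun i => (hgmeas i).aemeasurable)]
      exact (tsum_congr fun i => (hgint i)).symm
    rw [h1]
    have h2 : ∫⁻ ω, ∑' i, g i ω ∂ℙ ≤ ∫⁻ ω, ENNReal.ofReal (C * |ε ω| ^ α) ∂ℙ :=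
      lintegral_mono hpt
    have h3 : ∫⁻ ω, ENNReal.ofReal (C * |ε ω| ^ α) ∂ℙ < ⊤ := by
      have : ∀ ω, ENNReal.ofReal (C * |ε ω| ^ α)
          = ENNReal.ofReal C * ENNReal.ofReal (|ε ω| ^ α) := fun ω =>
        ENNReal.ofReal_mul hC0
      simp_rw [this]
      rw [lintegral_const_mul' _ _ ENNReal.ofReal_ne_top]
      apply ENNReal.mul_lt_top ENNReal.ofReal_lt_top
      have h4 := hεα.hasFiniteIntegral
      rw [HasFiniteIntegral] at h4
      have : ∀ ω, ENNReal.ofReal (|ε ω| ^ α) = ‖|ε ω| ^ α‖ₑ := fun ω =>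
        (Real.enorm_eq_ofReal (Real.rpow_nonneg (abs_nonneg _) α)).symm
      simp_rw [this]
      exact h4
    exact (lt_of_le_of_lt h2 h3).ne
  have hsum := ENNReal.summable_toReal hfin
  apply hsum.congr
  intro i
  rw [hInt i, ENNReal.toReal_mul, ENNReal.toReal_ofReal (hc0 i)]
end

section
/- Let 1 < α < 2 and let ε be a real random variable with Eε = 0 and E|ε|^α < ∞. Then ∑_{i=1}^∞ i^{-1/α} · |E(ε · 1_{{|ε|^α ≤ i}})| < ∞. -/
open MeasureTheory ProbabilityTheory

private lemma concave_aux (a q : ℝ) (ha : 0 ≤ a) (hq0 : 0 ≤ q) (hq1 : q ≤ 1) :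
    q * (a+1) ^ (q-1) ≤ (a+1) ^ q - a ^ q := by
  have hap : (0:ℝ) < a + 1 := by linarith
  have hs : (-1:ℝ) ≤ -(1/(a+1)) := by
    rw [neg_le_neg_iff, div_le_one hap]; linarith
  have h := rpow_one_add_le_one_add_mul_self hs hq0 hq1
  have he : 1 + -(1/(a+1)) = a / (a+1) := by field_simp; ring
  rw [he] at h
  have h2 : (a/(a+1)) ^ q = a ^ q / (a+1) ^ q := Real.div_rpow ha hap.le q
  rw [h2] at h
  have hpow : (0:ℝ) < (a+1) ^ q := Real.rpow_pos_of_pos hap q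
  have h3 : a ^ q ≤ (1 + q * -(1/(a+1))) * (a+1) ^ q := by
    rw [div_le_iff₀ hpow] at h; linarith
  have h4 : (a+1) ^ q / (a+1) = (a+1) ^ (q-1) := by
    rw [Real.rpow_sub hap, Real.rpow_one]
  have h5 : (1 + q * -(1/(a+1))) * (a+1) ^ q = (a+1)^q - q * ((a+1)^q / (a+1)) := by
    ring
  rw [h5, h4] at h3
  linarith

private lemma sum_ind_le (p : ℝ) (hp0 : 0 < p) (hp1 : p < 1) (y : ℝ) (hy : 0 ≤ y) (n : ℕ) :
    ∑ i ∈ Finset.range n, ((i:ℝ)+1)^(-p) * (if y ≤ (i:ℝ)+1 then (0:ℝ) else 1)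
      ≤ y ^ (1-p) / (1-p) := by
  set q : ℝ := 1 - p with hq
  have hq0 : 0 < q := by simp [hq]; linarith
  set g : ℕ → ℝ := fun i => (min (i:ℝ) y) ^ q with hg
  have hterm : ∀ i ∈ Finset.range n,
      ((i:ℝ)+1)^(-p) * (if y ≤ (i:ℝ)+1 then (0:ℝ) else 1) ≤ (g (i+1) - g i) / q := by
    intro i _
    have hmin0 : (0:ℝ) ≤ min (i:ℝ) y := le_min (Nat.cast_nonneg i) hy
    by_cases h : y ≤ (i:ℝ)+1
    · simp only [h, if_true, mul_zero]
      have : g i ≤ g (i+1) := by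
        apply Real.rpow_le_rpow hmin0 _ hq0.le
        exact min_le_min (by push_cast; linarith) le_rfl
      have := sub_nonneg.2 this
      positivity
    · simp only [h, if_false, mul_one]
      push_neg at h
      have hi1 : min ((i:ℝ)+1) y = (i:ℝ)+1 := min_eq_left h.le
      have hi0 : min ((i:ℝ)) y = (i:ℝ) := min_eq_left (by linarith)
      have hcon := concave_aux (i:ℝ) q (Nat.cast_nonneg i) hq0.le (by simp [hq]; linarith)
      have hqe : q - 1 = -p := by simp [hq]
      rw [hqe] at hcon
      rw [le_div_iff₀ hq0]
      have : g (i+1) - g i = ((i:ℝ)+1)^q - (i:ℝ)^q := by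
        simp only [hg]; push_cast; rw [hi1, hi0]
      rw [this]
      linarith [hcon]
  calc ∑ i ∈ Finset.range n, ((i:ℝ)+1)^(-p) * (if y ≤ (i:ℝ)+1 then (0:ℝ) else 1)
      ≤ ∑ i ∈ Finset.range n, (g (i+1) - g i) / q := Finset.sum_le_sum hterm
    _ = (∑ i ∈ Finset.range n, (g (i+1) - g i)) / q := by rw [Finset.sum_div]
    _ = (g n - g 0) / q := by rw [Finset.sum_range_sub]
    _ ≤ y ^ q / q := by
        apply div_le_div_of_nonneg_right _ hq0.le
        have hg0 : g 0 = 0 := by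
          simp only [hg, Nat.cast_zero, min_eq_left hy]
          exact Real.zero_rpow (ne_of_gt hq0)
        rw [hg0, sub_zero]
        exact Real.rpow_le_rpow (le_min (Nat.cast_nonneg _) hy) (min_le_right _ _) hq0.le

/-- Let `1 < α < 2` and let `ε` be a real random variable with `Eε = 0` and
`E|ε|^α < ∞`.  Then `∑_{i≥1} i^{-1/α} |E(ε 1_{|ε|^α ≤ i})| < ∞`.
Indexing convention: the Lean index `i : ℕ` corresponds to the index `i+1` of the paper. -/
theorem stmt6 {Ω : Type*} [MeasureSpace Ω] [IsProbabilityMeasure (ℙ : Measure Ω)]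
    (α : ℝ) (hα1 : 1 < α) (hα2 : α < 2)
    (ε : Ω → ℝ) (hεm : Measurable ε)
    (hεint : Integrable ε ℙ) (hεmean : ∫ ω, ε ω ∂ℙ = 0)
    (hεα : Integrable (fun ω => |ε ω| ^ α) ℙ) :
    Summable (fun i : ℕ => ((i : ℝ) + 1) ^ (-(1 / α)) *
      |∫ ω in {ω | |ε ω| ^ α ≤ (i : ℝ) + 1}, ε ω ∂ℙ|) := by
  have hα0 : (0:ℝ) < α := by linarith
  set p : ℝ := 1 / α with hp
  have hp0 : 0 < p := by positivity
  have hp1 : p < 1 := by rw [hp, div_lt_one hα0]; linarith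
  set A : ℕ → Set Ω := fun i => {ω | |ε ω| ^ α ≤ (i : ℝ) + 1} with hA
  have hAm : ∀ i, MeasurableSet (A i) := by
    intro i
    exact measurableSet_le (by fun_prop) measurable_const
  set F : ℕ → Ω → ℝ := fun i ω =>
    ((i:ℝ)+1)^(-p) * ((A i)ᶜ).indicator (fun ω => |ε ω|) ω with hF
  have hFint : ∀ i, Integrable (F i) ℙ := by
    intro i
    exact (hεint.abs.indicator (hAm i).compl).const_mul _
  -- Step 1 : each term is bounded by ∫ F i
  have hbound : ∀ i : ℕ, ((i : ℝ) + 1) ^ (-(1 / α)) *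
      |∫ ω in A i, ε ω ∂ℙ| ≤ ∫ ω, F i ω ∂ℙ := by
    intro i
    have hsplit : (∫ ω in A i, ε ω ∂ℙ) + (∫ ω in (A i)ᶜ, ε ω ∂ℙ) = 0 := by
      rw [integral_add_compl (hAm i) hεint, hεmean]
    have habs : |∫ ω in A i, ε ω ∂ℙ| ≤ ∫ ω, ((A i)ᶜ).indicator (fun ω => |ε ω|) ω ∂ℙ := by
      have h1 : ∫ ω in A i, ε ω ∂ℙ = -(∫ ω in (A i)ᶜ, ε ω ∂ℙ) := by linarith
      rw [h1, abs_neg, integral_indicator (hAm i).compl]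
      simpa [Real.norm_eq_abs] using norm_integral_le_integral_norm (fun ω => ε ω)
    rw [hF]
    simp only
    rw [integral_const_mul]
    exact mul_le_mul_of_nonneg_left habs (Real.rpow_nonneg (by positivity) _)
  -- Step 2 : partial sums of ∫ F i are uniformly bounded
  have hkey : ∀ n : ℕ, ∑ i ∈ Finset.range n, ∫ ω, F i ω ∂ℙ
      ≤ (∫ ω, |ε ω| ^ α ∂ℙ) / (1 - p) := by
    intro n
    rw [← integral_finset_sum _ (fun i _ => hFint i)]
    have hptwise : ∀ ω, ∑ i ∈ Finset.range n, F i ω ≤ |ε ω| ^ α / (1 - p) := by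
      intro ω
      set x : ℝ := |ε ω| with hx
      have hx0 : 0 ≤ x := abs_nonneg _
      have hrw : ∀ i : ℕ, F i ω
          = x * (((i:ℝ)+1)^(-p) * (if x ^ α ≤ (i:ℝ)+1 then (0:ℝ) else 1)) := by
        intro i
        rw [hF]
        simp only [Set.indicator_apply, Set.mem_compl_iff, hA, Set.mem_setOf_eq, hx]
        split_ifs with h1 h2 h2 <;> simp_all <;> ring
      calc ∑ i ∈ Finset.range n, F i ω
          = x * ∑ i ∈ Finset.range n,
              (((i:ℝ)+1)^(-p) * (if x ^ α ≤ (i:ℝ)+1 then (0:ℝ) else 1)) := by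
            rw [Finset.mul_sum]; exact Finset.sum_congr rfl (fun i _ => hrw i)
        _ ≤ x * ((x ^ α) ^ (1-p) / (1-p)) := by
            apply mul_le_mul_of_nonneg_left _ hx0
            exact sum_ind_le p hp0 hp1 (x ^ α) (Real.rpow_nonneg hx0 α) n
        _ = x ^ α / (1 - p) := by
            have h1 : (x ^ α) ^ (1-p) = x ^ (α - 1) := by
              rw [← Real.rpow_mul hx0]
              congr 1
              field_simp [hp]
              rw [hp, mul_sub, mul_one, mul_one_div_cancel hα0.ne']
            have h2 : x * x ^ (α-1) = x ^ α := by
              nth_rewrite 1 [← Real.rpow_one x]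
              rw [← Real.rpow_add' hx0
                (by rw [show (1:ℝ)+(α-1) = α by ring]; exact ne_of_gt hα0)]
              norm_num
            rw [h1, ← mul_div_assoc, h2]
    calc ∫ ω, ∑ i ∈ Finset.range n, F i ω ∂ℙ
        ≤ ∫ ω, |ε ω| ^ α / (1 - p) ∂ℙ := by
          apply integral_mono (integrable_finset_sum _ (fun i _ => hFint i))
            (hεα.div_const _) hptwise
      _ = (∫ ω, |ε ω| ^ α ∂ℙ) / (1 - p) := integral_div _ _
  -- Conclusion
  apply summable_of_sum_range_le
    (c := (∫ ω, |ε ω| ^ α ∂ℙ) / (1 - p))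
  · intro i
    positivity
  · intro n
    calc ∑ i ∈ Finset.range n, ((i : ℝ) + 1) ^ (-(1 / α)) *
          |∫ ω in A i, ε ω ∂ℙ|
        ≤ ∑ i ∈ Finset.range n, ∫ ω, F i ω ∂ℙ :=
          Finset.sum_le_sum (fun i _ => hbound i)
      _ ≤ (∫ ω, |ε ω| ^ α ∂ℙ) / (1 - p) := hkey n
end

section
/- Let p ≥ 1, let U_1, ..., U_p be independent random variables with values in [0,1] whose cumulative distribution functions F_i are continuous on [0,1], and let R_1, ..., R_p be real random variables such that E[R_i^4 | σ(U_1,...,U_p)] ≤ M almost surely for all i, for some constant M > 0. Set Y(t) = ∑_{i=1}^p R_i·1_{{U_i ≤ t}} and F = F_1 + ... + F_p. Then for all 0 ≤ t_1 ≤ t_2 ≤ 1: E(Y(t_2) − Y(t_1))² ≤ M^{1/2}·p²·(F(t_2) − F(t_1)). -/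
set_option maxHeartbeats 1000000
open MeasureTheory ProbabilityTheory

lemma stmt13_aux {Ω : Type*} [MeasureSpace Ω] [IsProbabilityMeasure (ℙ : Measure Ω)]
    {p : ℕ} (U : Fin p → Ω → ℝ) (hUm : ∀ i, Measurable (U i))
    (i : Fin p) (Ri : Ω → ℝ) (hRm : Measurable Ri)
    (hRint : Integrable (fun ω => Ri ω ^ 4) ℙ)
    (M : ℝ) (hM : 0 < M)
    (hcond : ∀ᵐ ω ∂ℙ,
      (ℙ[fun ω' => Ri ω' ^ 4 |
          MeasurableSpace.comap (fun ω' (j : Fin p) => U j ω') MeasurableSpace.pi]) ω ≤ M)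
    (t₁ t₂ : ℝ) :
    ∫ ω in ({ω | U i ω ≤ t₂} \ {ω | U i ω ≤ t₁}), Ri ω ^ 2 ∂ℙ ≤
      Real.sqrt M * (ℙ ({ω | U i ω ≤ t₂} \ {ω | U i ω ≤ t₁})).toReal := by
  have hm : MeasurableSpace.comap (fun ω' (j : Fin p) => U j ω') MeasurableSpace.pi
      ≤ MeasureSpace.toMeasurableSpace :=
    (measurable_pi_lambda _ (fun j => hUm j)).comap_le
  haveI : SigmaFinite ((ℙ : Measure Ω).trim hm) := by infer_instance
  set A : Set Ω := {ω | U i ω ≤ t₂} \ {ω | U i ω ≤ t₁} with hAdef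
  have hA0 : MeasurableSet A :=
    ((hUm i) measurableSet_Iic).diff ((hUm i) measurableSet_Iic)
  have hAm : MeasurableSet[MeasurableSpace.comap (fun ω' (j : Fin p) => U j ω') MeasurableSpace.pi] A := by
    refine ⟨{f : Fin p → ℝ | f i ≤ t₂} \ {f : Fin p → ℝ | f i ≤ t₁},
      ((measurable_pi_apply i) measurableSet_Iic).diff
        ((measurable_pi_apply i) measurableSet_Iic), rfl⟩
  have hsqrt : (0:ℝ) < Real.sqrt M := Real.sqrt_pos.2 hM
  have hmul : Real.sqrt M * Real.sqrt M = M := Real.mul_self_sqrt hM.le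
  have hR2int : Integrable (fun ω => Ri ω ^ 2) ℙ := by
    refine (hRint.add (integrable_const 1)).mono'
      ((hRm.pow_const 2).aestronglyMeasurable) ?_
    filter_upwards with ω
    simp only [Pi.add_apply, Real.norm_eq_abs, abs_of_nonneg (sq_nonneg (Ri ω))]
    nlinarith [sq_nonneg (Ri ω ^ 2 - 1)]
  have h4 : ∫ ω in A, Ri ω ^ 4 ∂ℙ ≤ M * (ℙ A).toReal := by
    have key := setIntegral_condExp hm hRint hAm
    rw [← key]
    have hb : ∫ ω in A, (ℙ[fun ω' => Ri ω' ^ 4 |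
          MeasurableSpace.comap (fun ω' (j : Fin p) => U j ω') MeasurableSpace.pi]) ω ∂ℙ
        ≤ ∫ _ω in A, M ∂ℙ :=
      setIntegral_mono_ae (integrable_condExp.integrableOn)
        ((integrable_const M).integrableOn) hcond
    refine hb.trans ?_
    rw [setIntegral_const, smul_eq_mul, mul_comm, measureReal_def]
  have hpt : ∀ ω, Ri ω ^ 2 ≤ Ri ω ^ 4 * (2 * Real.sqrt M)⁻¹ + Real.sqrt M / 2 := by
    intro ω
    rw [← sub_nonneg]
    have h : Ri ω ^ 4 * (2 * Real.sqrt M)⁻¹ + Real.sqrt M / 2 - Ri ω ^ 2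
        = (Ri ω ^ 2 - Real.sqrt M) ^ 2 * (2 * Real.sqrt M)⁻¹ := by
      field_simp
      nlinarith [hmul]
    rw [h]
    positivity
  have hint2 : IntegrableOn (fun ω => Ri ω ^ 2) A ℙ := hR2int.integrableOn
  have hintRHS : IntegrableOn (fun ω => Ri ω ^ 4 * (2 * Real.sqrt M)⁻¹ + Real.sqrt M / 2) A ℙ :=
    ((hRint.mul_const _).add (integrable_const _)).integrableOn
  calc ∫ ω in A, Ri ω ^ 2 ∂ℙ
      ≤ ∫ ω in A, (Ri ω ^ 4 * (2 * Real.sqrt M)⁻¹ + Real.sqrt M / 2) ∂ℙ :=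
        setIntegral_mono_ae hint2 hintRHS (Filter.Eventually.of_forall hpt)
    _ = (∫ ω in A, Ri ω ^ 4 ∂ℙ) * (2 * Real.sqrt M)⁻¹ + (Real.sqrt M / 2) * (ℙ A).toReal := by
        rw [integral_add (hRint.mul_const _).integrableOn (integrable_const _).integrableOn,
          integral_mul_const, setIntegral_const, smul_eq_mul, measureReal_def]
        ring
    _ ≤ M * (ℙ A).toReal * (2 * Real.sqrt M)⁻¹ + (Real.sqrt M / 2) * (ℙ A).toReal := by
        gcongr
    _ = Real.sqrt M * (ℙ A).toReal := by
        have h2 : (2 * Real.sqrt M)⁻¹ = 1 / (2 * Real.sqrt M) := by ring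
        field_simp
        nlinarith [hmul, ENNReal.toReal_nonneg (a := ℙ A)]


/-- Let `p ≥ 1`, `U_1,…,U_p` independent `[0,1]`-valued random variables with
continuous CDFs `F_i`, and `R_1,…,R_p` real random variables with
`E[R_i^4 | σ(U_1,…,U_p)] ≤ M` a.s.  With `Y(t) = ∑_i R_i 1_{U_i ≤ t}` and `F = ∑_i F_i`,
for all `0 ≤ t₁ ≤ t₂ ≤ 1`: `E(Y(t₂)-Y(t₁))² ≤ M^{1/2} p² (F(t₂)-F(t₁))`. -/
theorem stmt13 {Ω : Type*} [MeasureSpace Ω] [IsProbabilityMeasure (ℙ : Measure Ω)]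
    (p : ℕ) (hp : 1 ≤ p) (U R : Fin p → Ω → ℝ)
    (hUm : ∀ i, Measurable (U i)) (hUrange : ∀ i ω, U i ω ∈ Set.Icc (0 : ℝ) 1)
    (hUindep : iIndepFun U ℙ)
    (F : Fin p → ℝ → ℝ)
    (hF : ∀ i t, F i t = (ℙ {ω | U i ω ≤ t}).toReal)
    (hFcont : ∀ i, ContinuousOn (F i) (Set.Icc 0 1))
    (M : ℝ) (hM : 0 < M)
    (hRm : ∀ i, Measurable (R i))
    (hRint : ∀ i, Integrable (fun ω => R i ω ^ 4) ℙ)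
    (hcond : ∀ i, ∀ᵐ ω ∂ℙ,
      (ℙ[fun ω' => R i ω' ^ 4 |
          MeasurableSpace.comap (fun ω' (j : Fin p) => U j ω') MeasurableSpace.pi]) ω ≤ M)
    (t₁ t₂ : ℝ) (h0 : 0 ≤ t₁) (h12 : t₁ ≤ t₂) (h1 : t₂ ≤ 1) :
    ∫ ω, (∑ i, R i ω * (if U i ω ≤ t₂ then (1 : ℝ) else 0) -
          ∑ i, R i ω * (if U i ω ≤ t₁ then (1 : ℝ) else 0)) ^ 2 ∂ℙ
      ≤ Real.sqrt M * (p : ℝ) ^ 2 * ((∑ i, F i t₂) - ∑ i, F i t₁) := by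
  classical
  set A : Fin p → Set Ω := fun i => {ω | U i ω ≤ t₂} \ {ω | U i ω ≤ t₁} with hAdef
  have hA0 : ∀ i, MeasurableSet (A i) := fun i =>
    ((hUm i) measurableSet_Iic).diff ((hUm i) measurableSet_Iic)
  -- D values
  set D : Fin p → Ω → ℝ :=
    fun i ω => (if U i ω ≤ t₂ then (1 : ℝ) else 0) - (if U i ω ≤ t₁ then (1 : ℝ) else 0)
      with hDdef
  have hDind : ∀ i, (fun ω => R i ω ^ 2 * D i ω) = (A i).indicator (fun ω => R i ω ^ 2) := by
    intro i
    funext ω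
    by_cases h₁ : U i ω ≤ t₁
    · have h₂ : U i ω ≤ t₂ := h₁.trans h12
      simp [hDdef, hAdef, h₁, h₂, Set.indicator_apply]
    · by_cases h₂ : U i ω ≤ t₂
      · simp [hDdef, hAdef, h₁, h₂, Set.indicator_apply]
      · simp [hDdef, hAdef, h₁, h₂, Set.indicator_apply]
  have hR2int : ∀ i, Integrable (fun ω => R i ω ^ 2) ℙ := by
    intro i
    refine ((hRint i).add (integrable_const 1)).mono'
      (((hRm i).pow_const 2).aestronglyMeasurable) ?_
    filter_upwards with ω
    simp only [Pi.add_apply, Real.norm_eq_abs, abs_of_nonneg (sq_nonneg (R i ω))]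
    nlinarith [sq_nonneg (R i ω ^ 2 - 1)]
  have hintI : ∀ i, Integrable (fun ω => R i ω ^ 2 * D i ω) ℙ := by
    intro i
    rw [hDind i]
    exact (hR2int i).indicator (hA0 i)
  have hRHSint : Integrable (fun ω => (p : ℝ) * ∑ i, R i ω ^ 2 * D i ω) ℙ :=
    (integrable_finset_sum Finset.univ (fun i _ => hintI i)).const_mul _
  -- pointwise bound
  have hpt : ∀ ω, (∑ i, R i ω * (if U i ω ≤ t₂ then (1 : ℝ) else 0) -
          ∑ i, R i ω * (if U i ω ≤ t₁ then (1 : ℝ) else 0)) ^ 2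
      ≤ (p : ℝ) * ∑ i, R i ω ^ 2 * D i ω := by
    intro ω
    have hsum : (∑ i, R i ω * (if U i ω ≤ t₂ then (1 : ℝ) else 0) -
          ∑ i, R i ω * (if U i ω ≤ t₁ then (1 : ℝ) else 0))
        = ∑ i, R i ω * D i ω := by
      rw [← Finset.sum_sub_distrib]
      exact Finset.sum_congr rfl fun i _ => by rw [hDdef]; ring
    rw [hsum]
    have hcs := sq_sum_le_card_mul_sum_sq (s := Finset.univ)
      (f := fun i => R i ω * D i ω)
    simp only [Finset.card_univ, Fintype.card_fin] at hcs
    refine hcs.trans (le_of_eq ?_)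
    congr 1
    refine Finset.sum_congr rfl fun i _ => ?_
    have hDi : D i ω * D i ω = D i ω := by
      rw [hDdef]
      by_cases h₁ : U i ω ≤ t₁
      · have h₂ : U i ω ≤ t₂ := h₁.trans h12
        simp [h₁, h₂]
      · by_cases h₂ : U i ω ≤ t₂ <;> simp [h₁, h₂]
    calc (R i ω * D i ω) ^ 2 = R i ω ^ 2 * (D i ω * D i ω) := by ring
      _ = R i ω ^ 2 * D i ω := by rw [hDi]
  have hPA : ∀ i, (ℙ (A i)).toReal = F i t₂ - F i t₁ := by
    intro i
    have hsubset : {ω | U i ω ≤ t₁} ⊆ {ω | U i ω ≤ t₂} := fun ω h => le_trans h h12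
    have hsub : ℙ (A i) = ℙ {ω | U i ω ≤ t₂} - ℙ {ω | U i ω ≤ t₁} :=
      measure_diff hsubset ((hUm i) measurableSet_Iic).nullMeasurableSet (measure_ne_top _ _)
    rw [hF i t₂, hF i t₁, hsub,
      ENNReal.toReal_sub_of_le (measure_mono hsubset) (measure_ne_top _ _)]
  have hFnn : ∀ i : Fin p, 0 ≤ F i t₂ - F i t₁ := by
    intro i
    rw [← hPA i]; exact ENNReal.toReal_nonneg
  have hstep : ∫ ω, (∑ i, R i ω * (if U i ω ≤ t₂ then (1 : ℝ) else 0) -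
          ∑ i, R i ω * (if U i ω ≤ t₁ then (1 : ℝ) else 0)) ^ 2 ∂ℙ
      ≤ ∫ ω, (p : ℝ) * ∑ i, R i ω ^ 2 * D i ω ∂ℙ :=
    integral_mono_of_nonneg (Filter.Eventually.of_forall fun ω => sq_nonneg _)
      hRHSint (Filter.Eventually.of_forall hpt)
  refine hstep.trans ?_
  have hval : ∫ ω, (p : ℝ) * ∑ i, R i ω ^ 2 * D i ω ∂ℙ
      = (p : ℝ) * ∑ i, ∫ ω in A i, R i ω ^ 2 ∂ℙ := by
    rw [integral_const_mul, integral_finset_sum _ (fun i _ => hintI i)]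
    congr 1
    refine Finset.sum_congr rfl fun i _ => ?_
    rw [hDind i, integral_indicator (hA0 i)]
  rw [hval]
  have hbound : ∀ i : Fin p, ∫ ω in A i, R i ω ^ 2 ∂ℙ
      ≤ Real.sqrt M * (F i t₂ - F i t₁) := by
    intro i
    have := stmt13_aux U hUm i (R i) (hRm i) (hRint i) M hM (hcond i) t₁ t₂
    rw [hPA i] at this
    exact this
  have hsum : ((∑ i, F i t₂) - ∑ i, F i t₁) = ∑ i : Fin p, (F i t₂ - F i t₁) := by
    rw [Finset.sum_sub_distrib]
  rw [hsum]
  calc (p : ℝ) * ∑ i, ∫ ω in A i, R i ω ^ 2 ∂ℙ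
      ≤ (p : ℝ) * ∑ i : Fin p, Real.sqrt M * (F i t₂ - F i t₁) := by
        have hp0 : (0:ℝ) ≤ (p:ℝ) := Nat.cast_nonneg p
        exact mul_le_mul_of_nonneg_left (Finset.sum_le_sum fun i _ => hbound i) hp0
    _ = Real.sqrt M * (p : ℝ) * ∑ i : Fin p, (F i t₂ - F i t₁) := by
        rw [← Finset.mul_sum]; ring
    _ ≤ Real.sqrt M * (p : ℝ) ^ 2 * ∑ i : Fin p, (F i t₂ - F i t₁) := by
        have hS : 0 ≤ ∑ i : Fin p, (F i t₂ - F i t₁) :=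
          Finset.sum_nonneg fun i _ => hFnn i
        have hp1 : (1:ℝ) ≤ (p:ℝ) := Nat.one_le_cast.mpr hp
        have hp2 : (p : ℝ) ≤ (p : ℝ) ^ 2 := by nlinarith
        exact mul_le_mul_of_nonneg_right
          (mul_le_mul_of_nonneg_left hp2 (Real.sqrt_nonneg M)) hS
end

section
/- Let p ≥ 1, let U_1, ..., U_p be independent random variables with values in [0,1] whose cumulative distribution functions F_i are continuous on [0,1], and let R_1, ..., R_p be real random variables such that E[R_i^4 | σ(U_1,...,U_p)] ≤ M almost surely for all i, for some constant M > 0. Set Y(t) = ∑_{i=1}^p R_i·1_{{U_i ≤ t}} and F = F_1 + ... + F_p. Then for all 0 ≤ t_1 ≤ t ≤ t_2 ≤ 1: E((Y(t_2) − Y(t))²·(Y(t) − Y(t_1))²) ≤ M·p⁴·(F(t_2) − F(t_1))². -/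
open MeasureTheory ProbabilityTheory

-- pointwise Cauchy-Schwarz + AM-GM lemma
lemma stmt14_ptwise {n : ℕ} (r x y : Fin n → ℝ)
    (hx : ∀ i, x i = 0 ∨ x i = 1) (hy : ∀ i, y i = 0 ∨ y i = 1) :
    (∑ i, r i * x i) ^ 2 * (∑ i, r i * y i) ^ 2 ≤
      (n : ℝ) ^ 2 * ∑ i, ∑ k, ((r i ^ 4 + r k ^ 4) / 2) * (x i * y k) := by
  have key : ∀ (z : Fin n → ℝ), (∀ i, z i = 0 ∨ z i = 1) →
      (∑ i, r i * z i) ^ 2 ≤ (n : ℝ) * ∑ i, r i ^ 2 * z i := by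
    intro z hz
    have h1 : (∑ i, r i * z i) ^ 2 ≤ (Finset.univ : Finset (Fin n)).card * ∑ i, (r i * z i) ^ 2 :=
      sq_sum_le_card_mul_sum_sq
    have h2 : ∀ i, (r i * z i) ^ 2 = r i ^ 2 * z i := by
      intro i; rcases hz i with h | h <;> rw [h] <;> ring
    simpa [Finset.card_univ, h2] using h1
  have hA := key x hx
  have hB := key y hy
  have hxn : ∀ i, 0 ≤ x i := fun i => by rcases hx i with h | h <;> simp [h]
  have hyn : ∀ i, 0 ≤ y i := fun i => by rcases hy i with h | h <;> simp [h]
  have hAn : (0:ℝ) ≤ (n : ℝ) * ∑ i, r i ^ 2 * x i := by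
    apply mul_nonneg (Nat.cast_nonneg n)
    exact Finset.sum_nonneg fun i _ => mul_nonneg (sq_nonneg _) (hxn i)
  calc (∑ i, r i * x i) ^ 2 * (∑ i, r i * y i) ^ 2
      ≤ ((n:ℝ) * ∑ i, r i ^ 2 * x i) * ((n:ℝ) * ∑ i, r i ^ 2 * y i) :=
        mul_le_mul hA hB (sq_nonneg _) hAn
    _ = (n:ℝ)^2 * ((∑ i, r i ^ 2 * x i) * (∑ k, r k ^ 2 * y k)) := by ring
    _ = (n:ℝ)^2 * ∑ i, ∑ k, (r i ^ 2 * r k ^ 2) * (x i * y k) := by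
        rw [Finset.sum_mul_sum]
        congr 1
        refine Finset.sum_congr rfl fun i _ => Finset.sum_congr rfl fun k _ => by ring
    _ ≤ (n:ℝ)^2 * ∑ i, ∑ k, ((r i ^ 4 + r k ^ 4) / 2) * (x i * y k) := by
        apply mul_le_mul_of_nonneg_left _ (sq_nonneg _)
        refine Finset.sum_le_sum fun i _ => Finset.sum_le_sum fun k _ => ?_
        apply mul_le_mul_of_nonneg_right _ (mul_nonneg (hxn i) (hyn k))
        nlinarith [sq_nonneg (r i ^ 2 - r k ^ 2)]


/-- Let `p ≥ 1`, `U_1,…,U_p` independent `[0,1]`-valued random variables with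
continuous CDFs `F_i`, and `R_1,…,R_p` real random variables with
`E[R_i^4 | σ(U_1,…,U_p)] ≤ M` a.s.  With `Y(t) = ∑_i R_i 1_{U_i ≤ t}` and `F = ∑_i F_i`,
for all `0 ≤ t₁ ≤ t ≤ t₂ ≤ 1`:
`E((Y(t₂)-Y(t))² (Y(t)-Y(t₁))²) ≤ M p⁴ (F(t₂)-F(t₁))²`. -/
theorem stmt14 {Ω : Type*} [MeasureSpace Ω] [IsProbabilityMeasure (ℙ : Measure Ω)]
    (p : ℕ) (hp : 1 ≤ p) (U R : Fin p → Ω → ℝ)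
    (hUm : ∀ i, Measurable (U i)) (hUrange : ∀ i ω, U i ω ∈ Set.Icc (0 : ℝ) 1)
    (hUindep : iIndepFun U ℙ)
    (F : Fin p → ℝ → ℝ)
    (hF : ∀ i t, F i t = (ℙ {ω | U i ω ≤ t}).toReal)
    (hFcont : ∀ i, ContinuousOn (F i) (Set.Icc 0 1))
    (M : ℝ) (hM : 0 < M)
    (hRm : ∀ i, Measurable (R i))
    (hRint : ∀ i, Integrable (fun ω => R i ω ^ 4) ℙ)
    (hcond : ∀ i, ∀ᵐ ω ∂ℙ,
      (ℙ[fun ω' => R i ω' ^ 4 |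
          MeasurableSpace.comap (fun ω' (j : Fin p) => U j ω') MeasurableSpace.pi]) ω ≤ M)
    (t₁ t t₂ : ℝ) (h0 : 0 ≤ t₁) (h1 : t₁ ≤ t) (h2 : t ≤ t₂) (h3 : t₂ ≤ 1) :
    ∫ ω, (∑ i, R i ω * (if U i ω ≤ t₂ then (1 : ℝ) else 0) -
          ∑ i, R i ω * (if U i ω ≤ t then (1 : ℝ) else 0)) ^ 2 *
         (∑ i, R i ω * (if U i ω ≤ t then (1 : ℝ) else 0) -
          ∑ i, R i ω * (if U i ω ≤ t₁ then (1 : ℝ) else 0)) ^ 2 ∂ℙ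
      ≤ M * (p : ℝ) ^ 4 * ((∑ i, F i t₂) - ∑ i, F i t₁) ^ 2 := by
  classical
  have hUvec : Measurable (fun ω' (j : Fin p) => U j ω') :=
    measurable_pi_lambda _ fun j => hUm j
  have hm : MeasurableSpace.comap (fun ω' (j : Fin p) => U j ω') MeasurableSpace.pi
      ≤ (inferInstance : MeasurableSpace Ω) := hUvec.comap_le
  haveI : SigmaFinite ((ℙ : Measure Ω).trim hm) := by
    haveI : IsFiniteMeasure ((ℙ : Measure Ω).trim hm) := isFiniteMeasure_trim hm
    infer_instance
  -- indicator functions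
  set a : Fin p → Ω → ℝ := fun i ω => if U i ω ∈ Set.Ioc t t₂ then 1 else 0 with ha_def
  set b : Fin p → Ω → ℝ := fun i ω => if U i ω ∈ Set.Ioc t₁ t then 1 else 0 with hb_def
  have ha01 : ∀ i ω, a i ω = 0 ∨ a i ω = 1 := fun i ω => by
    by_cases h : U i ω ∈ Set.Ioc t t₂
    · exact Or.inr (if_pos h)
    · exact Or.inl (if_neg h)
  have hb01 : ∀ i ω, b i ω = 0 ∨ b i ω = 1 := fun i ω => by
    by_cases h : U i ω ∈ Set.Ioc t₁ t
    · exact Or.inr (if_pos h)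
    · exact Or.inl (if_neg h)
  -- rewrite the differences
  have hsubA : ∀ ω, (∑ i, R i ω * (if U i ω ≤ t₂ then (1:ℝ) else 0) -
          ∑ i, R i ω * (if U i ω ≤ t then (1:ℝ) else 0)) = ∑ i, R i ω * a i ω := by
    intro ω
    rw [← Finset.sum_sub_distrib]
    refine Finset.sum_congr rfl fun i _ => ?_
    rw [← mul_sub]
    congr 1
    by_cases h : U i ω ≤ t
    · simp [ha_def, h, h.trans h2, Set.mem_Ioc, not_lt.2 h]
    · by_cases h' : U i ω ≤ t₂ <;> simp [ha_def, h, h', Set.mem_Ioc, lt_of_not_ge h]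
  have hsubB : ∀ ω, (∑ i, R i ω * (if U i ω ≤ t then (1:ℝ) else 0) -
          ∑ i, R i ω * (if U i ω ≤ t₁ then (1:ℝ) else 0)) = ∑ i, R i ω * b i ω := by
    intro ω
    rw [← Finset.sum_sub_distrib]
    refine Finset.sum_congr rfl fun i _ => ?_
    rw [← mul_sub]
    congr 1
    by_cases h : U i ω ≤ t₁
    · simp [hb_def, h, h.trans h1, Set.mem_Ioc, not_lt.2 h]
    · by_cases h' : U i ω ≤ t <;> simp [hb_def, h, h', Set.mem_Ioc, lt_of_not_ge h]
  -- the sets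
  set S : Fin p → Fin p → Set Ω :=
    fun i k => (U i ⁻¹' Set.Ioc t t₂) ∩ (U k ⁻¹' Set.Ioc t₁ t) with hS_def
  have hSmeas : ∀ i k, MeasurableSet (S i k) := fun i k =>
    ((hUm i) measurableSet_Ioc).inter ((hUm k) measurableSet_Ioc)
  have hSm : ∀ i k, MeasurableSet[MeasurableSpace.comap
      (fun ω' (j : Fin p) => U j ω') MeasurableSpace.pi] (S i k) := by
    intro i k
    refine ⟨(Function.eval i ⁻¹' Set.Ioc t t₂) ∩ (Function.eval k ⁻¹' Set.Ioc t₁ t),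
      ((measurable_pi_apply i) measurableSet_Ioc).inter
        ((measurable_pi_apply k) measurableSet_Ioc), rfl⟩
  have hab_ind : ∀ i k ω, a i ω * b k ω = if ω ∈ S i k then 1 else 0 := by
    intro i k ω
    have hmem : ω ∈ S i k ↔ (U i ω ∈ Set.Ioc t t₂ ∧ U k ω ∈ Set.Ioc t₁ t) := Iff.rfl
    show (if U i ω ∈ Set.Ioc t t₂ then (1:ℝ) else 0) *
        (if U k ω ∈ Set.Ioc t₁ t then (1:ℝ) else 0) = if ω ∈ S i k then 1 else 0
    by_cases hi : U i ω ∈ Set.Ioc t t₂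
    · by_cases hk : U k ω ∈ Set.Ioc t₁ t
      · rw [if_pos hi, if_pos hk, if_pos (hmem.2 ⟨hi, hk⟩), one_mul]
      · rw [if_pos hi, if_neg hk, if_neg (fun h => hk (hmem.1 h).2), mul_zero]
    · rw [if_neg hi, zero_mul, if_neg (fun h => hi (hmem.1 h).1)]
  -- the delta F's
  have hPA : ∀ i, (ℙ (U i ⁻¹' Set.Ioc t t₂)).toReal = F i t₂ - F i t := by
    intro i
    have hdisj : Disjoint (U i ⁻¹' Set.Iic t) (U i ⁻¹' Set.Ioc t t₂) := by
      refine Set.disjoint_left.2 fun ω h1' h2' => ?_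
      exact absurd h1' (not_le.2 h2'.1)
    have hun : U i ⁻¹' Set.Iic t ∪ U i ⁻¹' Set.Ioc t t₂ = U i ⁻¹' Set.Iic t₂ := by
      rw [← Set.preimage_union, Set.Iic_union_Ioc_eq_Iic h2]
    have := measure_union (μ := (ℙ : Measure Ω)) hdisj ((hUm i) measurableSet_Ioc)
    rw [hun] at this
    have hIic : ∀ s : ℝ, {ω | U i ω ≤ s} = U i ⁻¹' Set.Iic s := fun s => rfl
    rw [hF i t₂, hF i t, hIic, hIic, this,
      ENNReal.toReal_add (measure_ne_top _ _) (measure_ne_top _ _)]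
    ring
  have hPB : ∀ i, (ℙ (U i ⁻¹' Set.Ioc t₁ t)).toReal = F i t - F i t₁ := by
    intro i
    have hdisj : Disjoint (U i ⁻¹' Set.Iic t₁) (U i ⁻¹' Set.Ioc t₁ t) := by
      refine Set.disjoint_left.2 fun ω h1' h2' => ?_
      exact absurd h1' (not_le.2 h2'.1)
    have hun : U i ⁻¹' Set.Iic t₁ ∪ U i ⁻¹' Set.Ioc t₁ t = U i ⁻¹' Set.Iic t := by
      rw [← Set.preimage_union, Set.Iic_union_Ioc_eq_Iic h1]
    have := measure_union (μ := (ℙ : Measure Ω)) hdisj ((hUm i) measurableSet_Ioc)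
    rw [hun] at this
    have hIic : ∀ s : ℝ, {ω | U i ω ≤ s} = U i ⁻¹' Set.Iic s := fun s => rfl
    rw [hF i t, hF i t₁, hIic, hIic, this,
      ENNReal.toReal_add (measure_ne_top _ _) (measure_ne_top _ _)]
    ring
  have hAnn : ∀ i, 0 ≤ F i t₂ - F i t := fun i => (hPA i) ▸ ENNReal.toReal_nonneg
  have hBnn : ∀ i, 0 ≤ F i t - F i t₁ := fun i => (hPB i) ▸ ENNReal.toReal_nonneg
  -- per-set probability bound
  have hPS : ∀ i k, (ℙ (S i k)).toReal ≤ (F i t₂ - F i t) * (F k t - F k t₁) := by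
    intro i k
    by_cases hik : i = k
    · subst hik
      have : S i i = ∅ := by
        refine Set.eq_empty_iff_forall_notMem.2 fun ω hω => ?_
        have hmem : ω ∈ S i i ↔ (U i ω ∈ Set.Ioc t t₂ ∧ U i ω ∈ Set.Ioc t₁ t) := Iff.rfl
        obtain ⟨⟨hlt, -⟩, ⟨-, hle⟩⟩ := hmem.1 hω
        exact absurd hle (not_le.2 hlt)
      rw [this]
      simp [mul_nonneg (hAnn i) (hBnn i)]
    · have hind := (hUindep.indepFun hik).measure_inter_preimage_eq_mul
        (Set.Ioc t t₂) (Set.Ioc t₁ t) measurableSet_Ioc measurableSet_Ioc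
      have : (ℙ (S i k)).toReal = (F i t₂ - F i t) * (F k t - F k t₁) := by
        rw [show S i k = (U i ⁻¹' Set.Ioc t t₂) ∩ (U k ⁻¹' Set.Ioc t₁ t) from rfl,
          hind, ENNReal.toReal_mul, hPA i, hPB k]
      exact this.le
  -- integral bound for each term
  have hterm : ∀ i k, (∫ ω, ((R i ω ^ 4 + R k ω ^ 4) / 2) * (a i ω * b k ω) ∂ℙ)
      ≤ M * (ℙ (S i k)).toReal := by
    intro i k
    have hind : (fun ω => ((R i ω ^ 4 + R k ω ^ 4) / 2) * (a i ω * b k ω))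
        = Set.indicator (S i k) (fun ω => (R i ω ^ 4 + R k ω ^ 4) / 2) := by
      funext ω
      rw [hab_ind i k ω]
      by_cases h : ω ∈ S i k
      · rw [if_pos h, Set.indicator_of_mem h, mul_one]
      · rw [if_neg h, Set.indicator_of_notMem h, mul_zero]
    have hsetint : ∀ m' : Fin p, (∫ ω in S i k, R m' ω ^ 4 ∂ℙ) ≤ (ℙ (S i k)).toReal * M := by
      intro m'
      calc (∫ ω in S i k, R m' ω ^ 4 ∂ℙ)
          = ∫ ω in S i k, (ℙ[fun ω' => R m' ω' ^ 4 |
              MeasurableSpace.comap (fun ω' (j : Fin p) => U j ω') MeasurableSpace.pi]) ω ∂ℙ :=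
            (setIntegral_condExp hm (hRint m') (hSm i k)).symm
        _ ≤ ∫ _ω in S i k, M ∂ℙ :=
            setIntegral_mono_ae integrable_condExp.integrableOn
              (integrableOn_const (measure_ne_top _ _)) (hcond m')
        _ = (ℙ (S i k)).toReal * M := by rw [setIntegral_const, smul_eq_mul]; rfl
    have hsplit : (∫ ω in S i k, (R i ω ^ 4 + R k ω ^ 4) / 2 ∂ℙ)
        = ((∫ ω in S i k, R i ω ^ 4 ∂ℙ) + ∫ ω in S i k, R k ω ^ 4 ∂ℙ) / 2 := by
      rw [integral_div, integral_add (hRint i).integrableOn (hRint k).integrableOn]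
    rw [hind, integral_indicator (hSmeas i k), hsplit]
    have := hsetint i
    have := hsetint k
    linarith
  have hterm_int : ∀ i k,
      Integrable (fun ω => ((R i ω ^ 4 + R k ω ^ 4) / 2) * (a i ω * b k ω)) ℙ := by
    intro i k
    have h1 : Integrable (fun ω => (R i ω ^ 4 + R k ω ^ 4) / 2) ℙ :=
      ((hRint i).add (hRint k)).div_const 2
    have := h1.bdd_mul (f := fun ω => a i ω * b k ω) (c := 1) ?_ ?_
    · exact this.congr (Filter.Eventually.of_forall fun ω => by ring)
    · exact (((Measurable.ite ((hUm i) measurableSet_Ioc) measurable_const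
        measurable_const)).mul ((Measurable.ite ((hUm k) measurableSet_Ioc) measurable_const
        measurable_const))).aestronglyMeasurable
    · refine Filter.Eventually.of_forall fun ω => ?_
      rcases ha01 i ω with h | h <;> rcases hb01 k ω with h' | h' <;>
        simp [h, h']
  -- integrable dominating function
  set g : Ω → ℝ := fun ω =>
    (p : ℝ) ^ 2 * ∑ i, ∑ k, ((R i ω ^ 4 + R k ω ^ 4) / 2) * (a i ω * b k ω) with hg_def
  have hg_int : Integrable g ℙ := by
    apply Integrable.const_mul
    exact integrable_finset_sum _ fun i _ => integrable_finset_sum _ fun k _ => hterm_int i k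
  have hf_meas : Measurable (fun ω =>
      (∑ i, R i ω * a i ω) ^ 2 * (∑ i, R i ω * b i ω) ^ 2) := by
    apply Measurable.mul <;> apply Measurable.pow _ measurable_const <;>
      refine Finset.measurable_sum _ fun i _ => (hRm i).mul ?_
    · exact Measurable.ite ((hUm i) measurableSet_Ioc) measurable_const measurable_const
    · exact Measurable.ite ((hUm i) measurableSet_Ioc) measurable_const measurable_const
  have hfg : ∀ ω, (∑ i, R i ω * a i ω) ^ 2 * (∑ i, R i ω * b i ω) ^ 2 ≤ g ω := by
    intro ω
    exact stmt14_ptwise (fun i => R i ω) (fun i => a i ω) (fun i => b i ω)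
      (fun i => ha01 i ω) (fun i => hb01 i ω)
  have hf_int : Integrable (fun ω =>
      (∑ i, R i ω * a i ω) ^ 2 * (∑ i, R i ω * b i ω) ^ 2) ℙ := by
    refine hg_int.mono' hf_meas.aestronglyMeasurable
      (Filter.Eventually.of_forall fun ω => ?_)
    rw [Real.norm_eq_abs, abs_of_nonneg (mul_nonneg (sq_nonneg _) (sq_nonneg _))]
    exact hfg ω
  -- main chain
  have hmain : ∫ ω, (∑ i, R i ω * a i ω) ^ 2 * (∑ i, R i ω * b i ω) ^ 2 ∂ℙ
      ≤ M * (p:ℝ)^2 * ((∑ i, (F i t₂ - F i t)) * (∑ k, (F k t - F k t₁))) := by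
    calc ∫ ω, (∑ i, R i ω * a i ω) ^ 2 * (∑ i, R i ω * b i ω) ^ 2 ∂ℙ
        ≤ ∫ ω, g ω ∂ℙ :=
          integral_mono_ae hf_int hg_int (Filter.Eventually.of_forall hfg)
      _ = (p:ℝ)^2 * ∑ i, ∑ k, ∫ ω, ((R i ω ^ 4 + R k ω ^ 4) / 2) * (a i ω * b k ω) ∂ℙ := by
          rw [hg_def]
          rw [integral_const_mul]
          congr 1
          rw [integral_finset_sum _ fun i _ => integrable_finset_sum _ fun k _ => hterm_int i k]
          exact Finset.sum_congr rfl fun i _ => integral_finset_sum _ fun k _ => hterm_int i k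
      _ ≤ (p:ℝ)^2 * ∑ i, ∑ k, M * ((F i t₂ - F i t) * (F k t - F k t₁)) := by
          apply mul_le_mul_of_nonneg_left _ (sq_nonneg _)
          refine Finset.sum_le_sum fun i _ => Finset.sum_le_sum fun k _ => ?_
          exact le_trans (hterm i k) (mul_le_mul_of_nonneg_left (hPS i k) hM.le)
      _ = M * (p:ℝ)^2 * ((∑ i, (F i t₂ - F i t)) * (∑ k, (F k t - F k t₁))) := by
          have hdouble : (∑ i, ∑ k, M * ((F i t₂ - F i t) * (F k t - F k t₁)))
              = M * ((∑ i, (F i t₂ - F i t)) * (∑ k, (F k t - F k t₁))) := by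
            rw [Finset.sum_mul_sum, Finset.mul_sum]
            refine Finset.sum_congr rfl fun i _ => ?_
            rw [Finset.mul_sum]
          rw [hdouble]; ring
  -- conclude
  have hEq : ∫ ω, (∑ i, R i ω * (if U i ω ≤ t₂ then (1 : ℝ) else 0) -
          ∑ i, R i ω * (if U i ω ≤ t then (1 : ℝ) else 0)) ^ 2 *
         (∑ i, R i ω * (if U i ω ≤ t then (1 : ℝ) else 0) -
          ∑ i, R i ω * (if U i ω ≤ t₁ then (1 : ℝ) else 0)) ^ 2 ∂ℙ
      = ∫ ω, (∑ i, R i ω * a i ω) ^ 2 * (∑ i, R i ω * b i ω) ^ 2 ∂ℙ := by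
    refine integral_congr_ae (Filter.Eventually.of_forall fun ω => ?_)
    dsimp only
    rw [hsubA ω, hsubB ω]
  rw [hEq]
  refine le_trans hmain ?_
  have hA : (0:ℝ) ≤ ∑ i, (F i t₂ - F i t) := Finset.sum_nonneg fun i _ => hAnn i
  have hB : (0:ℝ) ≤ ∑ k, (F k t - F k t₁) := Finset.sum_nonneg fun k _ => hBnn k
  have hsum : (∑ i, (F i t₂ - F i t)) + (∑ k, (F k t - F k t₁))
      = (∑ i, F i t₂) - ∑ i, F i t₁ := by
    rw [← Finset.sum_add_distrib, ← Finset.sum_sub_distrib]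
    exact Finset.sum_congr rfl fun i _ => by ring
  have hprod : (∑ i, (F i t₂ - F i t)) * (∑ k, (F k t - F k t₁))
      ≤ ((∑ i, F i t₂) - ∑ i, F i t₁) ^ 2 := by
    rw [← hsum]; nlinarith [mul_nonneg hA hA, mul_nonneg hB hB, mul_nonneg hA hB]
  have hp2 : (p:ℝ)^2 ≤ (p:ℝ)^4 := by
    have h1p : (1:ℝ) ≤ (p:ℝ) := by exact_mod_cast hp
    have h2' : (1:ℝ) ≤ (p:ℝ)^2 := by nlinarith
    calc (p:ℝ)^2 = (p:ℝ)^2 * 1 := by ring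
      _ ≤ (p:ℝ)^2 * (p:ℝ)^2 := mul_le_mul_of_nonneg_left h2' (sq_nonneg _)
      _ = (p:ℝ)^4 := by ring
  have hDnn : (0:ℝ) ≤ ((∑ i, F i t₂) - ∑ i, F i t₁) ^ 2 := sq_nonneg _
  calc M * (p:ℝ)^2 * ((∑ i, (F i t₂ - F i t)) * (∑ k, (F k t - F k t₁)))
      ≤ M * (p:ℝ)^2 * (((∑ i, F i t₂) - ∑ i, F i t₁) ^ 2) :=
        mul_le_mul_of_nonneg_left hprod (by positivity)
    _ ≤ M * (p:ℝ)^4 * (((∑ i, F i t₂) - ∑ i, F i t₁) ^ 2) :=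
        mul_le_mul_of_nonneg_right (mul_le_mul_of_nonneg_left hp2 hM.le) hDnn
end
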